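/- arXiv:2202.09883 — 4 statements merged into one kernel-verified Lean document; each statement's English description precedes it below -/
import Mathlib

section
/- Let L ∈ F⟨X⟩^{d×d} be a full linear matrix that is stably associated to a nonconstant polynomial f ∈ F⟨X⟩ (for instance, obtained from f by Higman linearization). Then there exist a unit U ∈ F⟨X⟩^{d×d}, an invertible scalar matrix S ∈ F^{d×d} and an integer r with 0 ≤ r < d such that U·L·S = L' ⊕ I_r, where L' ∈ F⟨X⟩^{(d−r)×(d−r)} is a full right monic linear matrix; moreover, if L is not right monic then r > 0. -/
open Matrix BigOperators

/-- The degree of an element of the free algebra: the maximal length of a word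
with nonzero coefficient. -/
noncomputable def ncDeg {F : Type*} [Field F] {σ : Type*} (f : FreeAlgebra F σ) : ℕ :=
  (((FreeAlgebra.equivMonoidAlgebraFreeMonoid (R := F) (X := σ)) f).coeff.support.sup fun w => FreeMonoid.length w)

/-- A noncommutative polynomial is irreducible if it has degree ≥ 1 and admits no
factorization into two factors of degree ≥ 1. -/
def NCIrred {F : Type*} [Field F] {σ : Type*} (f : FreeAlgebra F σ) : Prop :=
  1 ≤ ncDeg f ∧ ¬ ∃ g h : FreeAlgebra F σ, f = g * h ∧ 1 ≤ ncDeg g ∧ 1 ≤ ncDeg h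

/-- The linear matrix `A0 + ∑ i, A i • x i` with scalar coefficient matrices. -/
noncomputable def linMatrix {F : Type*} [Field F] {σ α β : Type*} [Fintype σ]
    (A0 : Matrix α β F) (A : σ → Matrix α β F) : Matrix α β (FreeAlgebra F σ) :=
  Matrix.of fun j k =>
    algebraMap F (FreeAlgebra F σ) (A0 j k) + ∑ i, A i j k • FreeAlgebra.ι F i

/-- A matrix over the free algebra is a linear matrix if each entry is an affine
linear form. -/
def IsLinearMat {F : Type*} [Field F] {σ α β : Type*} [Fintype σ]
    (M : Matrix α β (FreeAlgebra F σ)) : Prop :=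
  ∃ (A0 : Matrix α β F) (A : σ → Matrix α β F), M = linMatrix A0 A

/-- A square matrix is full if it cannot be written as a product through a smaller
dimension. -/
def IsFullMat {R : Type*} [Semiring R] {α : Type*} [Fintype α]
    (M : Matrix α α R) : Prop :=
  ¬ ∃ (e : ℕ) (_ : e < Fintype.card α)
      (M₁ : Matrix α (Fin e) R) (M₂ : Matrix (Fin e) α R), M = M₁ * M₂

/-- A full non-unit square matrix is an atom if it cannot be written as a product of
two full non-units. -/
def IsMatAtom {R : Type*} [Semiring R] {α : Type*} [Fintype α] [DecidableEq α]
    (M : Matrix α α R) : Prop :=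
  IsFullMat M ∧ ¬ IsUnit M ∧
    ∀ A B : Matrix α α R, M = A * B →
      ¬ (IsFullMat A ∧ ¬ IsUnit A ∧ IsFullMat B ∧ ¬ IsUnit B)

/-- The coefficient family `A` is right monic: `[A_1 A_2 ⋯ ]` has full row rank. -/
def RightMonicCoeffs {F : Type*} [Field F] {σ α : Type*} [Fintype σ] [Fintype α]
    (A : σ → Matrix α α F) : Prop :=
  (Matrix.of fun (j : α) (p : σ × α) => A p.1 j p.2).rank = Fintype.card α

/-- The coefficient family `A` is left monic: the stacked matrix has full column rank. -/
def LeftMonicCoeffs {F : Type*} [Field F] {σ α : Type*} [Fintype σ] [Fintype α]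
    (A : σ → Matrix α α F) : Prop :=
  (Matrix.of fun (p : σ × α) (k : α) => A p.1 p.2 k).rank = Fintype.card α

/-- A right monic linear matrix. -/
def IsRightMonicLinear {F : Type*} [Field F] {σ α : Type*} [Fintype σ] [Fintype α]
    (M : Matrix α α (FreeAlgebra F σ)) : Prop :=
  ∃ (A0 : Matrix α α F) (A : σ → Matrix α α F), M = linMatrix A0 A ∧ RightMonicCoeffs A

/-- A left monic linear matrix. -/
def IsLeftMonicLinear {F : Type*} [Field F] {σ α : Type*} [Fintype σ] [Fintype α]
    (M : Matrix α α (FreeAlgebra F σ)) : Prop :=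
  ∃ (A0 : Matrix α α F) (A : σ → Matrix α α F), M = linMatrix A0 A ∧ LeftMonicCoeffs A

/-- `M ⊕ I_k` : block diagonal with blocks `M` and the `k × k` identity. -/
def oplusId {R : Type*} [Semiring R] {d : ℕ} (M : Matrix (Fin d) (Fin d) R) (k : ℕ) :
    Matrix (Fin (d + k)) (Fin (d + k)) R :=
  Matrix.reindex finSumFinEquiv finSumFinEquiv (Matrix.fromBlocks M 0 0 1)

/-- A polynomial viewed as a `1 × 1` matrix. -/
def toMat1 {R : Type*} (f : R) : Matrix (Fin 1) (Fin 1) R := Matrix.of fun _ _ => f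

/-- Block lower triangular matrix `[[A, 0], [D, B]]`. -/
def lowerBlocks {R : Type*} [Semiring R] {r s : ℕ}
    (A : Matrix (Fin r) (Fin r) R) (D : Matrix (Fin s) (Fin r) R)
    (B : Matrix (Fin s) (Fin s) R) : Matrix (Fin (r + s)) (Fin (r + s)) R :=
  Matrix.reindex finSumFinEquiv finSumFinEquiv (Matrix.fromBlocks A 0 D B)

/-- `A` and `B` are stable associates: `A ⊕ I_t = P (B ⊕ I_t') Q` for units `P, Q`. -/
def StableAssoc {R : Type*} [Semiring R] {d d' : ℕ}
    (A : Matrix (Fin d) (Fin d) R) (B : Matrix (Fin d') (Fin d') R) : Prop :=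
  ∃ (t t' : ℕ), 0 < t ∧ 0 < t' ∧ ∃ (h : d' + t' = d + t),
    ∃ P Q : Matrix (Fin (d + t)) (Fin (d + t)) R, IsUnit P ∧ IsUnit Q ∧
      oplusId A t = P * Matrix.reindex (finCongr h) (finCongr h) (oplusId B t') * Q

/-- The dilated linear matrix `A0 ⊗ I_ℓ + ∑ i, A i ⊗ (Y i + M i)` in the matrix
variables `y_{i,j,k}`. -/
noncomputable def dilate {F : Type*} [Field F] {n d : ℕ}
    (A0 : Matrix (Fin d) (Fin d) F) (A : Fin n → Matrix (Fin d) (Fin d) F) (ℓ : ℕ)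
    (M : Fin n → Matrix (Fin ℓ) (Fin ℓ) F) :
    Matrix (Fin d × Fin ℓ) (Fin d × Fin ℓ) (FreeAlgebra F (Fin n × Fin ℓ × Fin ℓ)) :=
  Matrix.of fun p q =>
    algebraMap F (FreeAlgebra F (Fin n × Fin ℓ × Fin ℓ))
      (A0 p.1 q.1 * (if p.2 = q.2 then 1 else 0) + ∑ i, A i p.1 q.1 * M i p.2 q.2) +
      ∑ i : Fin n, A i p.1 q.1 • FreeAlgebra.ι F (i, p.2, q.2)

/-- The diagonal block of `M` corresponding to the fiber `b ⁻¹ {i}`, reindexed by `Fin`. -/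
noncomputable def diagBlock {R : Type*} {d r : ℕ} (M : Matrix (Fin d) (Fin d) R)
    (b : Fin d → Fin r) (i : Fin r) :
    Matrix (Fin (Fintype.card {j : Fin d // b j = i}))
      (Fin (Fintype.card {j : Fin d // b j = i})) R :=
  Matrix.of fun x y =>
    M ((Fintype.equivFin {j : Fin d // b j = i}).symm x : {j : Fin d // b j = i})
      ((Fintype.equivFin {j : Fin d // b j = i}).symm y : {j : Fin d // b j = i})

section UnitLemma

variable {F : Type*} [Field F] {σ : Type*}

lemma mul_apply_top (p q : MonoidAlgebra F (FreeMonoid σ)) {u v : FreeMonoid σ}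
    (hu : u ∈ p.coeff.support) (hv : v ∈ q.coeff.support)
    (hmaxu : ∀ w ∈ p.coeff.support, FreeMonoid.length w ≤ FreeMonoid.length u)
    (hmaxv : ∀ w ∈ q.coeff.support, FreeMonoid.length w ≤ FreeMonoid.length v) :
    (p * q).coeff (u * v) = p.coeff u * q.coeff v := by
  classical
  rw [MonoidAlgebra.coeff_mul, Finsupp.sum, Finset.sum_eq_single u]
  · rw [Finsupp.sum, Finset.sum_eq_single v]
    · rw [if_pos rfl]
    · intro w hw hne
      rw [if_neg fun h => hne (mul_left_cancel h)]
    · intro h; exact absurd hv h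
  · intro w hw hne
    rw [Finsupp.sum]
    apply Finset.sum_eq_zero
    intro z hz
    rw [if_neg]
    intro h
    have hlen : FreeMonoid.length w = FreeMonoid.length u := by
      have h' := congrArg FreeMonoid.length h
      rw [FreeMonoid.length_mul, FreeMonoid.length_mul] at h'
      have h1 := hmaxu w hw
      have h2 := hmaxv z hz
      omega
    exact hne (FreeMonoid.toList.injective
      (List.append_inj_left (congrArg FreeMonoid.toList h) hlen))
  · intro h; exact absurd hu h

lemma ncDeg_eq_zero_of_isUnit {f : FreeAlgebra F σ} (hf : IsUnit f) : ncDeg f = 0 := by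
  classical
  obtain ⟨w, rfl⟩ := hf
  obtain ⟨g, hg⟩ : ∃ g, (w : FreeAlgebra F σ) * g = 1 := ⟨w.inv, w.val_inv⟩
  set Φ := FreeAlgebra.equivMonoidAlgebraFreeMonoid (R := F) (X := σ) with hΦ
  set p := Φ (w : FreeAlgebra F σ) with hp
  set q := Φ g with hq
  have hpq : p * q = 1 := by rw [hp, hq, ← _root_.map_mul, hg, _root_.map_one]
  have hp0 : p ≠ 0 := by intro h; rw [h, zero_mul] at hpq; exact zero_ne_one hpq
  have hq0 : q ≠ 0 := by intro h; rw [h, mul_zero] at hpq; exact zero_ne_one hpq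
  obtain ⟨u, hu, hsu⟩ := Finset.exists_mem_eq_sup p.coeff.support
    (Finsupp.support_nonempty_iff.mpr (fun h => hp0 (MonoidAlgebra.coeff_eq_zero.mp h))) (fun w => FreeMonoid.length w)
  obtain ⟨v, hv, hsv⟩ := Finset.exists_mem_eq_sup q.coeff.support
    (Finsupp.support_nonempty_iff.mpr (fun h => hq0 (MonoidAlgebra.coeff_eq_zero.mp h))) (fun w => FreeMonoid.length w)
  have hkey := mul_apply_top p q hu hv
    (fun x hx => hsu ▸ Finset.le_sup (f := fun w => FreeMonoid.length w) hx)
    (fun x hx => hsv ▸ Finset.le_sup (f := fun w => FreeMonoid.length w) hx)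
  rw [hpq] at hkey
  have hne : p.coeff u * q.coeff v ≠ 0 :=
    mul_ne_zero (Finsupp.mem_support_iff.1 hu) (Finsupp.mem_support_iff.1 hv)
  have huv : u * v = 1 := by
    by_contra h
    rw [MonoidAlgebra.one_def, MonoidAlgebra.coeff_single, Finsupp.single_apply, if_neg fun h' => h h'.symm] at hkey
    exact hne hkey.symm
  have hlen : FreeMonoid.length u = 0 := by
    have := congrArg FreeMonoid.length huv
    rw [FreeMonoid.length_mul] at this
    simpa using Nat.eq_zero_of_add_eq_zero_right this
  show (Φ _).coeff.support.sup _ = 0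
  rw [← hp, hsu]
  exact hlen

end UnitLemma
section MatrixHelpers

lemma finSumFinEquiv_symm_eq {d k : ℕ} (i : Fin (d + k)) :
    finSumFinEquiv.symm i =
      if h : (i : ℕ) < d then Sum.inl ⟨i, h⟩ else Sum.inr ⟨(i : ℕ) - d, by omega⟩ := by
  by_cases h : (i : ℕ) < d
  · rw [dif_pos h]
    have hi : i = Fin.castAdd k ⟨(i : ℕ), h⟩ := by ext; rfl
    conv_lhs => rw [hi]
    rw [finSumFinEquiv_symm_apply_castAdd]
  · rw [dif_neg h]
    have hi : i = Fin.natAdd d ⟨(i : ℕ) - d, by omega⟩ := by ext; simp; omega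
    conv_lhs => rw [hi]
    rw [finSumFinEquiv_symm_apply_natAdd]

lemma oplusId_apply {R : Type*} [Semiring R] {d : ℕ} (M : Matrix (Fin d) (Fin d) R) (k : ℕ)
    (i j : Fin (d + k)) :
    oplusId M k i j =
      if hi : (i : ℕ) < d then (if hj : (j : ℕ) < d then M ⟨i, hi⟩ ⟨j, hj⟩ else 0)
      else if (i : ℕ) = (j : ℕ) then 1 else 0 := by
  rw [oplusId, Matrix.reindex_apply, Matrix.submatrix_apply, finSumFinEquiv_symm_eq,
    finSumFinEquiv_symm_eq]
  by_cases hi : (i : ℕ) < d <;> by_cases hj : (j : ℕ) < d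
  · rw [dif_pos hi, dif_pos hj, dif_pos hi, dif_pos hj, Matrix.fromBlocks_apply₁₁]
  · rw [dif_pos hi, dif_neg hj, dif_pos hi, dif_neg hj, Matrix.fromBlocks_apply₁₂,
      Matrix.zero_apply]
  · rw [dif_neg hi, dif_pos hj, dif_neg hi, Matrix.fromBlocks_apply₂₁, Matrix.zero_apply,
      if_neg (by omega : ¬ (i : ℕ) = (j : ℕ))]
  · rw [dif_neg hi, dif_neg hj, dif_neg hi, Matrix.fromBlocks_apply₂₂, Matrix.one_apply]
    exact if_congr (by rw [Fin.mk.injEq]; omega) rfl rfl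

lemma oplus_reindex_apply {R : Type*} [Semiring R] {e r d : ℕ} (M : Matrix (Fin e) (Fin e) R)
    (heq : e + r = d) (i j : Fin d) :
    Matrix.reindex (finCongr heq) (finCongr heq) (oplusId M r) i j =
      if hi : (i : ℕ) < e then (if hj : (j : ℕ) < e then M ⟨i, hi⟩ ⟨j, hj⟩ else 0)
      else if (i : ℕ) = (j : ℕ) then 1 else 0 := by
  rw [Matrix.reindex_apply, Matrix.submatrix_apply, oplusId_apply]
  simp only [finCongr_symm, finCongr_apply, Fin.coe_cast]

lemma isUnit_of_mul_inv {R : Type*} [Semiring R] {m : Type*} [Fintype m] [DecidableEq m]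
    (A B : Matrix m m R) (h1 : A * B = 1) (h2 : B * A = 1) : IsUnit A :=
  ⟨⟨A, B, h1, h2⟩, rfl⟩

lemma isUnit_submatrix_equiv {R : Type*} [Semiring R] {m n : Type*} [Fintype m] [Fintype n]
    [DecidableEq m] [DecidableEq n] (e : n ≃ m) {A : Matrix m m R} (h : IsUnit A) :
    IsUnit (A.submatrix e e) := by
  obtain ⟨u, rfl⟩ := h
  refine isUnit_of_mul_inv _ ((u.inv).submatrix e e) ?_ ?_
  · rw [Matrix.submatrix_mul_equiv, u.val_inv, Matrix.submatrix_one_equiv]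
  · rw [Matrix.submatrix_mul_equiv, u.inv_val, Matrix.submatrix_one_equiv]

lemma isUnit_fromBlocks_triangular {R : Type*} [Ring R] {m n : Type*} [Fintype m] [Fintype n]
    [DecidableEq m] [DecidableEq n] {A : Matrix m m R} (B : Matrix m n R) {D : Matrix n n R}
    (hA : IsUnit A) (hD : IsUnit D) : IsUnit (Matrix.fromBlocks A B 0 D) := by
  obtain ⟨uA, rfl⟩ := hA
  obtain ⟨uD, rfl⟩ := hD
  refine isUnit_of_mul_inv _ (Matrix.fromBlocks uA.inv (-(uA.inv * B * uD.inv)) 0 uD.inv) ?_ ?_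
  · have h12 : uA.val * -(uA.inv * B * uD.inv) + B * uD.inv = 0 := by
      rw [Matrix.mul_neg, ← Matrix.mul_assoc, ← Matrix.mul_assoc, uA.val_inv, Matrix.one_mul,
        neg_add_cancel]
    rw [Matrix.fromBlocks_multiply, h12]
    simp only [Matrix.mul_zero, Matrix.zero_mul, add_zero, zero_add, uA.val_inv, uD.val_inv]
    exact Matrix.fromBlocks_one
  · have h12 : uA.inv * B + -(uA.inv * B * uD.inv) * uD.val = 0 := by
      rw [Matrix.neg_mul, Matrix.mul_assoc (uA.inv * B), uD.inv_val, Matrix.mul_one,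
        add_neg_cancel]
    rw [Matrix.fromBlocks_multiply, h12]
    simp only [Matrix.mul_zero, Matrix.zero_mul, add_zero, zero_add, uA.inv_val, uD.inv_val]
    exact Matrix.fromBlocks_one

end MatrixHelpers

section LinMatrixHelpers

variable {F : Type*} [Field F] {σ : Type*} [Fintype σ]

lemma alg_mul_smul (r c : F) (x : FreeAlgebra F σ) :
    algebraMap F (FreeAlgebra F σ) r * (c • x) = (r * c) • x := by
  rw [Algebra.smul_def, Algebra.smul_def, ← mul_assoc, ← _root_.map_mul]

lemma smul_mul_alg (r c : F) (x : FreeAlgebra F σ) :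
    (c • x) * algebraMap F (FreeAlgebra F σ) r = (c * r) • x := by
  rw [Algebra.smul_def, Algebra.smul_def, mul_assoc, ← Algebra.commutes r x, ← mul_assoc,
    ← _root_.map_mul]

lemma map_mul_linMatrix {α β γ : Type*} [Fintype β] (P : Matrix α β F)
    (A0 : Matrix β γ F) (A : σ → Matrix β γ F) :
    P.map (algebraMap F (FreeAlgebra F σ)) * linMatrix A0 A =
      linMatrix (P * A0) (fun i => P * A i) := by
  ext j k
  rw [Matrix.mul_apply]
  simp only [Matrix.map_apply, linMatrix, Matrix.of_apply, Matrix.mul_apply]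
  simp only [mul_add, Finset.mul_sum, alg_mul_smul, ← _root_.map_mul]
  rw [Finset.sum_add_distrib]
  congr 1
  · rw [← _root_.map_sum]
  · rw [Finset.sum_comm]
    exact Finset.sum_congr rfl fun i _ => (Finset.sum_smul).symm

lemma linMatrix_mul_map {α β γ : Type*} [Fintype β] (A0 : Matrix α β F) (A : σ → Matrix α β F)
    (Q : Matrix β γ F) :
    linMatrix A0 A * Q.map (algebraMap F (FreeAlgebra F σ)) =
      linMatrix (A0 * Q) (fun i => A i * Q) := by
  ext j k
  rw [Matrix.mul_apply]
  simp only [Matrix.map_apply, linMatrix, Matrix.of_apply, Matrix.mul_apply]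
  simp only [add_mul, Finset.sum_mul, smul_mul_alg, ← _root_.map_mul]
  rw [Finset.sum_add_distrib]
  congr 1
  · rw [← _root_.map_sum]
  · rw [Finset.sum_comm]
    exact Finset.sum_congr rfl fun i _ => (Finset.sum_smul).symm

lemma linMatrix_submatrix {α β α' β' : Type*} (A0 : Matrix α β F) (A : σ → Matrix α β F)
    (u : α' → α) (v : β' → β) :
    (linMatrix A0 A).submatrix u v =
      linMatrix (A0.submatrix u v) (fun i => (A i).submatrix u v) := rfl

end LinMatrixHelpers
section LinAlg

variable {F : Type*} [Field F]

lemma exists_unit_extend {d e r : ℕ} (hd : e + r = d) {w : Fin r → (Fin d → F)}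
    (hw : LinearIndependent F w) :
    ∃ (T : Matrix (Fin e ⊕ Fin r) (Fin d) F) (T' : Matrix (Fin d) (Fin e ⊕ Fin r) F),
      T * T' = 1 ∧ T' * T = 1 ∧ ∀ m, T (Sum.inr m) = w m := by
  classical
  set K : Submodule F (Fin d → F) := Submodule.span F (Set.range w) with hKdef
  obtain ⟨W, hWK⟩ := Submodule.exists_isCompl K
  have hK : Module.finrank F K = r := by
    rw [hKdef, finrank_span_eq_card hw, Fintype.card_fin]
  have hW : Module.finrank F W = e := by
    have h1 := Submodule.finrank_add_eq_of_isCompl hWK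
    rw [hK, Module.finrank_fin_fun] at h1
    omega
  let bK : Module.Basis (Fin r) F K := Module.Basis.span hw
  let bW : Module.Basis (Fin e) F W := Module.finBasisOfFinrankEq F W hW
  let B : Module.Basis (Fin e ⊕ Fin r) F (Fin d → F) :=
    (bW.prod bK).map (Submodule.prodEquivOfIsCompl W K hWK.symm)
  let P : Module.Basis (Fin d) F (Fin d → F) := Pi.basisFun F (Fin d)
  refine ⟨(P.toMatrix B)ᵀ, (B.toMatrix P)ᵀ, ?_, ?_, ?_⟩
  · rw [← Matrix.transpose_mul, Module.Basis.toMatrix_mul_toMatrix_flip, Matrix.transpose_one]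
  · rw [← Matrix.transpose_mul, Module.Basis.toMatrix_mul_toMatrix_flip, Matrix.transpose_one]
  · intro m
    funext j
    show (P.toMatrix B) j (Sum.inr m) = w m j
    rw [Module.Basis.toMatrix_apply]
    have hBm : B (Sum.inr m) = w m := by
      have h1 : (bW.prod bK) (Sum.inr m) = (0, bK m) :=
        Prod.ext (Module.Basis.prod_apply_inr_fst _ _ _) (Module.Basis.prod_apply_inr_snd _ _ _)
      show (Submodule.prodEquivOfIsCompl W K hWK.symm) ((bW.prod bK) (Sum.inr m)) = w m
      rw [h1, Submodule.coe_prodEquivOfIsCompl', Submodule.coe_zero, zero_add]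
      exact congrArg Subtype.val (Module.Basis.span_apply hw m)
    rw [hBm]
    exact Pi.basisFun_repr F (Fin d) (w m) j

lemma finrank_ker_vecMulLinear {d : ℕ} {α : Type*} [Fintype α] [DecidableEq α]
    (R : Matrix (Fin d) α F) :
    Module.finrank F (LinearMap.ker R.vecMulLinear) = d - R.rank ∧ R.rank ≤ d := by
  have hker : R.vecMulLinear = Rᵀ.mulVecLin := by
    apply LinearMap.ext
    intro v
    rw [Matrix.vecMulLinear_apply, Matrix.mulVecLin_apply, Matrix.mulVec_transpose]
  have hrank : Rᵀ.rank = R.rank := Matrix.rank_transpose R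
  have hrn := LinearMap.finrank_range_add_finrank_ker Rᵀ.mulVecLin
  rw [Module.finrank_fin_fun] at hrn
  have hRt : Rᵀ.rank = Module.finrank F (LinearMap.range Rᵀ.mulVecLin) := rfl
  constructor
  · rw [hker]; omega
  · omega

lemma not_full_of_left_annihilator {n d : ℕ} (L : Matrix (Fin d) (Fin d) (FreeAlgebra F (Fin n)))
    {v : Fin d → F} (hv : v ≠ 0)
    (hann : Matrix.vecMul (fun j => algebraMap F (FreeAlgebra F (Fin n)) (v j)) L = 0) :
    ¬ IsFullMat L := by
  classical
  obtain ⟨j0, hj0⟩ := Function.ne_iff.mp hv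
  have hd : 0 < d := j0.pos
  have hw : LinearIndependent F (fun _ : Fin 1 => v) :=
    linearIndependent_unique_iff.mpr (by simpa using hv)
  obtain ⟨T, T', h1, h2, h3⟩ := exists_unit_extend (by omega : (d - 1) + 1 = d) hw
  set alg := algebraMap F (FreeAlgebra F (Fin n)) with halg
  set Ta := T.map alg with hTa
  set T'a := T'.map alg with hT'a
  set N := Ta * L with hN
  have hbot : ∀ k, N (Sum.inr 0) k = 0 := by
    intro k
    rw [hN, Matrix.mul_apply]
    have : ∀ j, Ta (Sum.inr 0) j = alg (v j) := by
      intro j; rw [hTa, Matrix.map_apply, h3]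
    calc ∑ j, Ta (Sum.inr 0) j * L j k = ∑ j, alg (v j) * L j k := by
          exact Finset.sum_congr rfl fun j _ => by rw [this]
      _ = 0 := by
          have := congrFun hann k
          rw [Matrix.vecMul, dotProduct] at this
          exact this
  set J : Matrix (Fin (d - 1) ⊕ Fin 1) (Fin (d - 1)) (FreeAlgebra F (Fin n)) :=
    Matrix.of fun s t => if s = Sum.inl t then 1 else 0 with hJ
  set Top : Matrix (Fin (d - 1)) (Fin d) (FreeAlgebra F (Fin n)) :=
    Matrix.of fun t k => N (Sum.inl t) k with hTop
  have hfac : N = J * Top := by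
    ext s k
    rcases s with t | m
    · rw [Matrix.mul_apply, Finset.sum_eq_single t]
      · simp [hJ, hTop]
      · intro t' _ hne
        rw [hJ]
        simp only [Matrix.of_apply]
        rw [if_neg (by simpa [Sum.inl.injEq] using (Ne.symm hne)), zero_mul]
      · intro h; exact absurd (Finset.mem_univ t) h
    · rw [Matrix.mul_apply]
      have hm : m = 0 := Subsingleton.elim m 0
      subst hm
      rw [Finset.sum_eq_zero, hbot]
      intro t _
      rw [hJ]
      simp only [Matrix.of_apply]
      rw [if_neg (by simp), zero_mul]
  intro hfull
  apply hfull
  refine ⟨d - 1, by rw [Fintype.card_fin]; omega, T'a * J, Top, ?_⟩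
  have hTT : T'a * Ta = 1 := by
    rw [hT'a, hTa, ← Matrix.map_mul, h2, Matrix.map_one alg (map_zero alg) (map_one alg)]
  calc L = 1 * L := (Matrix.one_mul L).symm
    _ = T'a * Ta * L := by rw [hTT]
    _ = T'a * N := by rw [Matrix.mul_assoc, hN]
    _ = T'a * (J * Top) := by rw [hfac]
    _ = T'a * J * Top := by rw [Matrix.mul_assoc]

end LinAlg
section MoreHelpers

lemma oplus_absorb {R : Type*} [Semiring R] {e r' e₀ r₀ d : ℕ} (M : Matrix (Fin e) (Fin e) R)
    (heq' : e + r' = e₀) (heq0 : e₀ + r₀ = d) (heq : e + (r' + r₀) = d) :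
    (Matrix.fromBlocks (Matrix.reindex (finCongr heq') (finCongr heq') (oplusId M r')) 0 0
        (1 : Matrix (Fin r₀) (Fin r₀) R)).submatrix
        (finSumFinEquiv.trans (finCongr heq0)).symm (finSumFinEquiv.trans (finCongr heq0)).symm =
      Matrix.reindex (finCongr heq) (finCongr heq) (oplusId M (r' + r₀)) := by
  have hee : e ≤ e₀ := by omega
  ext i j
  rw [Matrix.submatrix_apply, oplus_reindex_apply]
  simp only [Equiv.symm_trans_apply, finCongr_symm, finCongr_apply]
  rw [finSumFinEquiv_symm_eq, finSumFinEquiv_symm_eq]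
  simp only [Fin.coe_cast]
  by_cases hi : (i : ℕ) < e₀ <;> by_cases hj : (j : ℕ) < e₀
  · rw [dif_pos hi, dif_pos hj, Matrix.fromBlocks_apply₁₁, oplus_reindex_apply]
  · rw [dif_pos hi, dif_neg hj, Matrix.fromBlocks_apply₁₂, Matrix.zero_apply]
    by_cases hie : (i : ℕ) < e
    · rw [dif_pos hie, dif_neg (show ¬ (j : ℕ) < e by omega)]
    · rw [dif_neg hie, if_neg (show ¬ (i : ℕ) = (j : ℕ) by omega)]
  · rw [dif_neg hi, dif_pos hj, Matrix.fromBlocks_apply₂₁, Matrix.zero_apply,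
      dif_neg (show ¬ (i : ℕ) < e by omega), if_neg (show ¬ (i : ℕ) = (j : ℕ) by omega)]
  · rw [dif_neg hi, dif_neg hj, Matrix.fromBlocks_apply₂₂, Matrix.one_apply,
      dif_neg (show ¬ (i : ℕ) < e by omega)]
    exact if_congr (by rw [Fin.mk.injEq]; omega) rfl rfl

lemma isUnit_oplusId {R : Type*} [Ring R] {d : ℕ} {M : Matrix (Fin d) (Fin d) R} (h : IsUnit M)
    (k : ℕ) : IsUnit (oplusId M k) := by
  rw [oplusId, Matrix.reindex_apply]
  exact isUnit_submatrix_equiv finSumFinEquiv.symm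
    (isUnit_fromBlocks_triangular 0 h isUnit_one)

lemma isUnit_of_oplus_toMat1 {R : Type*} [Ring R] {f : R} {t : ℕ}
    (h : IsUnit (oplusId (toMat1 f) t)) : IsUnit f := by
  obtain ⟨u, hu⟩ := h
  have h1 : oplusId (toMat1 f) t * u.inv = 1 := by rw [← hu]; exact u.val_inv
  have h2 : u.inv * oplusId (toMat1 f) t = 1 := by rw [← hu]; exact u.inv_val
  set i0 : Fin (1 + t) := ⟨0, by omega⟩ with hi0
  have hi0v : (i0 : ℕ) = 0 := rfl
  have hrow : ∀ k, oplusId (toMat1 f) t i0 k = if k = i0 then f else 0 := by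
    intro k
    rw [oplusId_apply, dif_pos (show ((i0 : ℕ) < 1) by rw [hi0v]; omega)]
    by_cases hk : (k : ℕ) < 1
    · rw [dif_pos hk, if_pos (Fin.ext (show (k:ℕ) = (i0:ℕ) by rw [hi0v]; omega))]
      rfl
    · rw [dif_neg hk, if_neg (fun hc => hk (by rw [hc, hi0v]; omega))]
  have hcol : ∀ k, oplusId (toMat1 f) t k i0 = if k = i0 then f else 0 := by
    intro k
    rw [oplusId_apply]
    by_cases hk : (k : ℕ) < 1
    · rw [dif_pos hk, dif_pos (show ((i0 : ℕ) < 1) by rw [hi0v]; omega),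
        if_pos (Fin.ext (show (k:ℕ) = (i0:ℕ) by rw [hi0v]; omega))]
      rfl
    · rw [dif_neg hk, if_neg (show ¬ (k:ℕ) = (i0:ℕ) by rw [hi0v]; omega),
        if_neg (fun hc => hk (by rw [hc, hi0v]; omega))]
  have e1 := congrFun (congrFun h1 i0) i0
  have e2 := congrFun (congrFun h2 i0) i0
  rw [Matrix.mul_apply] at e1 e2
  rw [Finset.sum_eq_single i0 (fun k _ hk => by rw [hrow, if_neg hk, zero_mul])
    (fun hk => absurd (Finset.mem_univ i0) hk), hrow, if_pos rfl] at e1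
  rw [Finset.sum_eq_single i0 (fun k _ hk => by rw [hcol, if_neg hk, mul_zero])
    (fun hk => absurd (Finset.mem_univ i0) hk), hcol, if_pos rfl] at e2
  rw [Matrix.one_apply_eq] at e1 e2
  exact ⟨⟨f, u.inv i0 i0, e1, e2⟩, rfl⟩

section AlgVec

variable {F : Type*} [Field F] {σ : Type*} [Fintype σ]

lemma alg_vecMul_linMatrix {α β : Type*} [Fintype α] (v : α → F) (A0 : Matrix α β F)
    (A : σ → Matrix α β F) (k : β) :
    ∑ j, algebraMap F (FreeAlgebra F σ) (v j) * linMatrix A0 A j k =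
      algebraMap F (FreeAlgebra F σ) (∑ j, v j * A0 j k) +
        ∑ i, (∑ j, v j * A i j k) • FreeAlgebra.ι F i := by
  simp only [linMatrix, Matrix.of_apply]
  simp only [mul_add, Finset.mul_sum, alg_mul_smul, ← _root_.map_mul]
  rw [Finset.sum_add_distrib]
  congr 1
  · rw [← _root_.map_sum]
  · rw [Finset.sum_comm]
    exact Finset.sum_congr rfl fun i _ => (Finset.sum_smul).symm

end AlgVec

end MoreHelpers
section Helper2

lemma submatrix_mul_submatrix_id {R : Type*} [Semiring R] {a b c a' c' : Type*} [Fintype b]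
    (M : Matrix a b R) (N : Matrix b c R) (ea : a' → a) (ec : c' → c) :
    M.submatrix ea id * N.submatrix id ec = (M * N).submatrix ea ec := by
  ext i j
  simp [Matrix.mul_apply]

end Helper2

section Main

variable {F : Type*} [Field F] {n : ℕ}

local notation "algFn" => algebraMap F (FreeAlgebra F (Fin n))

theorem aux_main :
    ∀ (d : ℕ) (L : Matrix (Fin d) (Fin d) (FreeAlgebra F (Fin n))),
      IsFullMat L → IsLinearMat L → ¬ IsUnit L →
      ∃ (e r : ℕ) (heq : e + r = d)
        (U : Matrix (Fin d) (Fin d) (FreeAlgebra F (Fin n)))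
        (S : Matrix (Fin d) (Fin d) F)
        (L' : Matrix (Fin e) (Fin e) (FreeAlgebra F (Fin n))),
        0 < e ∧ IsUnit U ∧ IsUnit S ∧ IsFullMat L' ∧ IsRightMonicLinear L' ∧
        U * L * S.map (algebraMap F (FreeAlgebra F (Fin n))) =
          Matrix.reindex (finCongr heq) (finCongr heq) (oplusId L' r) ∧
        (¬ IsRightMonicLinear L → 0 < r) := by
  intro d
  induction d using Nat.strong_induction_on with
  | _ d IH =>
  intro L hfull hlin hnu
  classical
  rcases Nat.eq_zero_or_pos d with hd0 | hd
  · exfalso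
    apply hnu
    subst hd0
    have hL1 : L = 1 := by ext i j; exact i.elim0
    rw [hL1]
    exact isUnit_one
  obtain ⟨A0, A, hLA⟩ := hlin
  set Rst : Matrix (Fin d) (Fin n × Fin d) F :=
    Matrix.of (fun (j : Fin d) (p : Fin n × Fin d) => A p.1 j p.2) with hRst
  obtain ⟨hkerdim, hρle⟩ := finrank_ker_vecMulLinear Rst
  by_cases hρ : Rst.rank = d
  · -- already right monic
    have hmonic : IsRightMonicLinear L := by
      refine ⟨A0, A, hLA, ?_⟩
      show (Matrix.of fun (j : Fin d) (p : Fin n × Fin d) => A p.1 j p.2).rank =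
        Fintype.card (Fin d)
      rw [← hRst, Fintype.card_fin]
      exact hρ
    refine ⟨d, 0, by omega, 1, 1, L, hd, isUnit_one, isUnit_one, hfull, hmonic, ?_,
      fun hc => absurd hmonic hc⟩
    rw [Matrix.map_one algFn (map_zero algFn) (map_one algFn), Matrix.one_mul, Matrix.mul_one]
    ext i j
    rw [oplus_reindex_apply, dif_pos i.isLt]
    rw [dif_pos j.isLt]
  -- deficient case
  have hρlt : Rst.rank < d := lt_of_le_of_ne hρle hρ
  set e₀ := Rst.rank with he₀
  set r₀ := d - e₀ with hr₀def
  have hr₀ : 0 < r₀ := by omega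
  have heq0 : e₀ + r₀ = d := by omega
  set K := LinearMap.ker Rst.vecMulLinear with hK
  have hKdim : Module.finrank F K = r₀ := hkerdim
  set bK := Module.finBasisOfFinrankEq F K hKdim with hbK
  have hw : LinearIndependent F (fun m => ((bK m : Fin d → F))) :=
    bK.linearIndependent.map' K.subtype K.ker_subtype
  obtain ⟨T, T', hT1, hT2, hT3⟩ := exists_unit_extend heq0 hw
  have hTA : ∀ (m : Fin r₀) (i : Fin n) (k : Fin d), ∑ j, T (Sum.inr m) j * A i j k = 0 := by
    intro m i k
    have hmem : ((bK m : Fin d → F)) ∈ K := (bK m).2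
    have hmem2 : Rst.vecMulLinear ((bK m : Fin d → F)) = 0 := LinearMap.mem_ker.mp hmem
    have h2 := congrFun hmem2 (i, k)
    rw [hRst] at h2
    simp only [Matrix.vecMulLinear_apply, Matrix.vecMul, dotProduct, Pi.zero_apply,
      Matrix.of_apply] at h2
    rw [hT3]
    exact h2
  set C : Fin r₀ → (Fin d → F) := fun m k => ∑ j, T (Sum.inr m) j * A0 j k with hC
  have hCli : LinearIndependent F C := by
    by_contra hnl
    rw [Fintype.not_linearIndependent_iff] at hnl
    obtain ⟨g, hg, m0, hm0⟩ := hnl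
    set u : Fin e₀ ⊕ Fin r₀ → F := Sum.elim (fun _ => 0) g with hu
    set v : Fin d → F := Matrix.vecMul u T with hv
    have hv0 : ∀ (M : Matrix (Fin d) (Fin d) F),
        Matrix.vecMul v M = fun k => ∑ m, g m * ∑ j, T (Sum.inr m) j * M j k := by
      intro M
      funext k
      rw [hv, Matrix.vecMul_vecMul]
      show ∑ s, u s * (T * M) s k = _
      rw [Fintype.sum_sum_type]
      simp only [hu, Sum.elim_inl, Sum.elim_inr, zero_mul, Finset.sum_const_zero, zero_add]
      exact Finset.sum_congr rfl fun m _ => by rw [Matrix.mul_apply]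
    have hvA : ∀ i : Fin n, Matrix.vecMul v (A i) = 0 := by
      intro i
      rw [hv0]
      funext k
      simp only [hTA, mul_zero, Finset.sum_const_zero, Pi.zero_apply]
    have hvA0 : Matrix.vecMul v A0 = 0 := by
      rw [hv0]
      funext k
      have h3 := congrFun hg k
      simp only [Finset.sum_apply, Pi.smul_apply, smul_eq_mul, Pi.zero_apply, hC] at h3
      simpa using h3
    have hvne : v ≠ 0 := by
      intro h0
      have hu0 : u = 0 := by
        have h1 : Matrix.vecMul v T' = 0 := by rw [h0, Matrix.zero_vecMul]
        rw [hv, Matrix.vecMul_vecMul, hT1, Matrix.vecMul_one] at h1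
        exact h1
      have h2 := congrFun hu0 (Sum.inr m0)
      simp only [hu, Sum.elim_inr, Pi.zero_apply] at h2
      exact hm0 h2
    have hann : Matrix.vecMul (fun j => algFn (v j)) L = 0 := by
      funext k
      show ∑ j, algFn (v j) * L j k = 0
      rw [hLA]
      show ∑ j, algFn (v j) * linMatrix A0 A j k = 0
      rw [alg_vecMul_linMatrix]
      have h1 : ∑ j, v j * A0 j k = 0 := by
        have := congrFun hvA0 k
        simpa [Matrix.vecMul, dotProduct] using this
      have h2 : ∀ i : Fin n, ∑ j, v j * A i j k = 0 := by
        intro i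
        have := congrFun (hvA i) k
        simpa [Matrix.vecMul, dotProduct] using this
      rw [h1, _root_.map_zero, zero_add]
      apply Finset.sum_eq_zero
      intro i _
      rw [h2 i, zero_smul]
    exact (not_full_of_left_annihilator L hvne hann) hfull
  obtain ⟨S, S', hS1, hS2, hS3⟩ := exists_unit_extend heq0 hCli
  set Ta := T.map algFn with hTa
  set T'a := T'.map algFn with hT'a
  set Sa := S.map algFn with hSa
  set S'a := S'.map algFn with hS'a
  have hTT : T'a * Ta = 1 := by
    rw [hT'a, hTa, ← Matrix.map_mul, hT2, Matrix.map_one algFn (map_zero algFn) (map_one algFn)]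
  have hTT' : Ta * T'a = 1 := by
    rw [hT'a, hTa, ← Matrix.map_mul, hT1, Matrix.map_one algFn (map_zero algFn) (map_one algFn)]
  have hSS : S'a * Sa = 1 := by
    rw [hS'a, hSa, ← Matrix.map_mul, hS2, Matrix.map_one algFn (map_zero algFn) (map_one algFn)]
  have hSS' : Sa * S'a = 1 := by
    rw [hS'a, hSa, ← Matrix.map_mul, hS1, Matrix.map_one algFn (map_zero algFn) (map_one algFn)]
  set B0 := T * A0 * S' with hB0
  set B : Fin n → Matrix (Fin e₀ ⊕ Fin r₀) (Fin e₀ ⊕ Fin r₀) F := fun i => T * A i * S' with hB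
  set N := linMatrix B0 B with hN
  have hNlin : Ta * L * S'a = N := by
    rw [hN, hB0, hB, hTa, hS'a, hLA]
    rw [map_mul_linMatrix]
    rw [linMatrix_mul_map]
  have hB0bot : ∀ (m : Fin r₀) (s : Fin e₀ ⊕ Fin r₀),
      B0 (Sum.inr m) s = (1 : Matrix (Fin e₀ ⊕ Fin r₀) (Fin e₀ ⊕ Fin r₀) F) (Sum.inr m) s := by
    intro m s
    rw [hB0, Matrix.mul_apply]
    calc ∑ k, (T * A0) (Sum.inr m) k * S' k s = ∑ k, S (Sum.inr m) k * S' k s := by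
          refine Finset.sum_congr rfl fun k _ => ?_
          rw [hS3, hC, Matrix.mul_apply]
      _ = (S * S') (Sum.inr m) s := (Matrix.mul_apply).symm
      _ = _ := by rw [hS1]
  have hBbot : ∀ (i : Fin n) (m : Fin r₀) (s : Fin e₀ ⊕ Fin r₀), B i (Sum.inr m) s = 0 := by
    intro i m s
    rw [hB]
    show ∑ k, (T * A i) (Sum.inr m) k * S' k s = 0
    apply Finset.sum_eq_zero
    intro k _
    rw [Matrix.mul_apply, hTA, zero_mul]
  set N11 := Matrix.of fun s t => N (Sum.inl s) (Sum.inl t) with hN11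
  set N12 := Matrix.of fun s m => N (Sum.inl s) (Sum.inr m) with hN12
  have hNb : N = Matrix.fromBlocks N11 N12 0 1 := by
    ext s t
    rcases s with s | m <;> rcases t with t | m'
    · rfl
    · rfl
    · rw [Matrix.fromBlocks_apply₂₁, Matrix.zero_apply, hN]
      show algFn (B0 (Sum.inr m) (Sum.inl t)) +
        ∑ i, B i (Sum.inr m) (Sum.inl t) • FreeAlgebra.ι F i = 0
      have h1 : B0 (Sum.inr m) (Sum.inl t) = 0 := by
        rw [hB0bot]
        exact Matrix.one_apply_ne (by simp)
      rw [h1, _root_.map_zero, zero_add]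
      apply Finset.sum_eq_zero
      intro i _
      rw [hBbot, zero_smul]
    · rw [Matrix.fromBlocks_apply₂₂, hN]
      show algFn (B0 (Sum.inr m) (Sum.inr m')) +
        ∑ i, B i (Sum.inr m) (Sum.inr m') • FreeAlgebra.ι F i =
          (1 : Matrix (Fin r₀) (Fin r₀) (FreeAlgebra F (Fin n))) m m'
      have h1 : B0 (Sum.inr m) (Sum.inr m') = (1 : Matrix (Fin r₀) (Fin r₀) F) m m' := by
        rw [hB0bot, Matrix.one_apply, Matrix.one_apply]
        exact if_congr (by simp) rfl rfl
      have h2 : ∑ i, B i (Sum.inr m) (Sum.inr m') • FreeAlgebra.ι F i = 0 := by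
        apply Finset.sum_eq_zero
        intro i _
        rw [hBbot, zero_smul]
      rw [h1, h2, add_zero, Matrix.one_apply, Matrix.one_apply, apply_ite algFn, _root_.map_one,
        _root_.map_zero]
  have hLfac : L = T'a * N * Sa := by
    rw [← hNlin]
    calc L = (T'a * Ta) * L * (S'a * Sa) := by rw [hTT, hSS, Matrix.one_mul, Matrix.mul_one]
      _ = T'a * (Ta * L * S'a) * Sa := by simp only [Matrix.mul_assoc]
  have hN11full : IsFullMat N11 := by
    intro hcon
    obtain ⟨e', he', P₁, P₂, hP⟩ := hcon
    rw [Fintype.card_fin] at he'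
    apply hfull
    have hmul2 : Matrix.fromBlocks P₁ N12 (0 : Matrix (Fin r₀) (Fin e') (FreeAlgebra F (Fin n))) 1 *
        Matrix.fromBlocks P₂ 0 0 (1 : Matrix (Fin r₀) (Fin r₀) (FreeAlgebra F (Fin n))) =
        Matrix.fromBlocks (P₁ * P₂) N12 0 1 := by
      rw [Matrix.fromBlocks_multiply]
      simp only [Matrix.mul_zero, Matrix.zero_mul, Matrix.mul_one, Matrix.one_mul, add_zero,
        zero_add]
    have hNfac : N = Matrix.fromBlocks P₁ N12 (0 : Matrix (Fin r₀) (Fin e') (FreeAlgebra F (Fin n))) 1 * Matrix.fromBlocks P₂ 0 0 (1 : Matrix (Fin r₀) (Fin r₀) (FreeAlgebra F (Fin n))) := by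
      rw [hmul2, ← hP, ← hNb]
    refine ⟨e' + r₀, by rw [Fintype.card_fin]; omega,
      (T'a * Matrix.fromBlocks P₁ N12 (0 : Matrix (Fin r₀) (Fin e') (FreeAlgebra F (Fin n))) 1).submatrix id finSumFinEquiv.symm,
      (Matrix.fromBlocks P₂ 0 0 (1 : Matrix (Fin r₀) (Fin r₀) (FreeAlgebra F (Fin n))) * Sa).submatrix finSumFinEquiv.symm id, ?_⟩
    rw [Matrix.submatrix_mul_equiv, Matrix.submatrix_id_id, hLfac, hNfac]
    simp only [Matrix.mul_assoc]
  have hN11lin : IsLinearMat N11 := by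
    refine ⟨Matrix.of fun s t => B0 (Sum.inl s) (Sum.inl t),
      fun i => Matrix.of fun s t => B i (Sum.inl s) (Sum.inl t), ?_⟩
    ext s t
    rfl
  have hN11nu : ¬ IsUnit N11 := by
    intro hN11u
    apply hnu
    obtain ⟨uu, huu⟩ := isUnit_fromBlocks_triangular N12 hN11u
      (isUnit_one : IsUnit (1 : Matrix (Fin r₀) (Fin r₀) (FreeAlgebra F (Fin n))))
    have hNu : N * uu.inv = 1 := by rw [hNb, ← huu]; exact uu.val_inv
    have hNu' : uu.inv * N = 1 := by rw [hNb, ← huu]; exact uu.inv_val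
    refine isUnit_of_mul_inv L (S'a * uu.inv * Ta) ?_ ?_
    · calc L * (S'a * uu.inv * Ta) = T'a * (N * ((Sa * S'a) * (uu.inv * Ta))) := by
            rw [hLfac]; simp only [Matrix.mul_assoc]
        _ = T'a * (N * (uu.inv * Ta)) := by rw [hSS', Matrix.one_mul]
        _ = T'a * ((N * uu.inv) * Ta) := by rw [Matrix.mul_assoc]
        _ = T'a * Ta := by rw [hNu, Matrix.one_mul]
        _ = 1 := hTT
    · calc (S'a * uu.inv * Ta) * L = S'a * (uu.inv * ((Ta * T'a) * (N * Sa))) := by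
            rw [hLfac]; simp only [Matrix.mul_assoc]
        _ = S'a * (uu.inv * (N * Sa)) := by rw [hTT', Matrix.one_mul]
        _ = S'a * ((uu.inv * N) * Sa) := by rw [Matrix.mul_assoc]
        _ = S'a * Sa := by rw [hNu', Matrix.one_mul]
        _ = 1 := hSS
  obtain ⟨e, r', heq', U', S'', L'', he, hU', hS'', hL''full, hL''monic, heqn, _⟩ :=
    IH e₀ (by omega) N11 hN11full hN11lin hN11nu
  set π : (Fin e₀ ⊕ Fin r₀) ≃ Fin d := finSumFinEquiv.trans (finCongr heq0) with hπ
  set U₂ : Matrix (Fin e₀ ⊕ Fin r₀) (Fin e₀ ⊕ Fin r₀) (FreeAlgebra F (Fin n)) :=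
    Matrix.fromBlocks 1 (-N12) 0 1 with hU₂
  set G := Matrix.fromBlocks U' 0 0 (1 : Matrix (Fin r₀) (Fin r₀) (FreeAlgebra F (Fin n))) * U₂
    with hG
  have hGN : G * N = Matrix.fromBlocks (U' * N11) 0 0 1 := by
    rw [hG, hNb, Matrix.mul_assoc, hU₂]
    have h1 : Matrix.fromBlocks 1 (-N12) 0 1 * Matrix.fromBlocks N11 N12 0 1 =
        Matrix.fromBlocks N11 0 0 (1 : Matrix (Fin r₀) (Fin r₀) (FreeAlgebra F (Fin n))) := by
      rw [Matrix.fromBlocks_multiply]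
      simp only [Matrix.mul_zero, Matrix.zero_mul, Matrix.mul_one, Matrix.one_mul, add_zero,
        zero_add, Matrix.neg_mul, neg_zero, add_neg_cancel]
    rw [h1, Matrix.fromBlocks_multiply]
    simp only [Matrix.mul_zero, Matrix.zero_mul, Matrix.mul_one, Matrix.one_mul, add_zero,
      zero_add]
  have hGunit : IsUnit G := by
    rw [hG, hU₂]
    exact (isUnit_fromBlocks_triangular 0 hU' isUnit_one).mul
      (isUnit_fromBlocks_triangular (-N12) isUnit_one isUnit_one)
  refine ⟨e, r' + r₀, by omega,
    G.submatrix π.symm π.symm * Ta.submatrix π.symm id,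
    S'.submatrix id π.symm *
      (Matrix.fromBlocks S'' 0 0 (1 : Matrix (Fin r₀) (Fin r₀) F)).submatrix π.symm π.symm,
    L'', he, ?_, ?_, hL''full, hL''monic, ?_, fun _ => by omega⟩
  · apply IsUnit.mul
    · exact isUnit_submatrix_equiv π.symm hGunit
    · refine isUnit_of_mul_inv _ (T'a.submatrix id π.symm) ?_ ?_
      · rw [submatrix_mul_submatrix_id, hTT', Matrix.submatrix_one_equiv]
      · rw [Matrix.submatrix_mul_equiv, hTT, Matrix.submatrix_id_id]
  · apply IsUnit.mul
    · refine isUnit_of_mul_inv _ (S.submatrix π.symm id) ?_ ?_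
      · rw [Matrix.submatrix_mul_equiv, hS2, Matrix.submatrix_id_id]
      · rw [submatrix_mul_submatrix_id, hS1, Matrix.submatrix_one_equiv]
    · exact isUnit_submatrix_equiv π.symm (isUnit_fromBlocks_triangular 0 hS'' isUnit_one)
  · -- the equation
    have hmap : (S'.submatrix id π.symm *
        (Matrix.fromBlocks S'' 0 0 (1 : Matrix (Fin r₀) (Fin r₀) F)).submatrix π.symm π.symm).map
          algFn =
        S'a.submatrix id π.symm *
          ((Matrix.fromBlocks S'' 0 0 (1 : Matrix (Fin r₀) (Fin r₀) F)).map algFn).submatrix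
            π.symm π.symm := by
      rw [Matrix.map_mul, hS'a, Matrix.submatrix_map, Matrix.submatrix_map]
    rw [hmap]
    have c1 : G.submatrix (⇑π.symm) (⇑π.symm) * Ta.submatrix (⇑π.symm) id =
        (G * Ta).submatrix (⇑π.symm) id :=
      Matrix.submatrix_mul_equiv G Ta (⇑π.symm) π.symm id
    have c2 : (G * Ta).submatrix (⇑π.symm) id * L = ((G * Ta) * L).submatrix (⇑π.symm) id := by
      conv_lhs => rw [← Matrix.submatrix_id_id L]
      rw [submatrix_mul_submatrix_id]
    have c3 : ((G * Ta) * L).submatrix (⇑π.symm) id * S'a.submatrix id (⇑π.symm) =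
        ((G * Ta) * L * S'a).submatrix (⇑π.symm) (⇑π.symm) :=
      submatrix_mul_submatrix_id _ _ _ _
    have c4 : ((G * Ta) * L * S'a).submatrix (⇑π.symm) (⇑π.symm) *
        ((Matrix.fromBlocks S'' 0 0 (1 : Matrix (Fin r₀) (Fin r₀) F)).map algFn).submatrix
          (⇑π.symm) (⇑π.symm) =
        ((G * Ta) * L * S'a *
          ((Matrix.fromBlocks S'' 0 0 (1 : Matrix (Fin r₀) (Fin r₀) F)).map algFn)).submatrix
          (⇑π.symm) (⇑π.symm) :=
      Matrix.submatrix_mul_equiv _ _ _ π.symm _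
    have hval : (G * Ta) * L * S'a *
        ((Matrix.fromBlocks S'' 0 0 (1 : Matrix (Fin r₀) (Fin r₀) F)).map algFn) =
        Matrix.fromBlocks
          (Matrix.reindex (finCongr heq') (finCongr heq') (oplusId L'' r')) 0 0
          (1 : Matrix (Fin r₀) (Fin r₀) (FreeAlgebra F (Fin n))) := by
      have h5 : (G * Ta) * L * S'a = G * N := by
        rw [← hNlin]; simp only [Matrix.mul_assoc]
      rw [h5, hGN]
      have h6 : (Matrix.fromBlocks S'' 0 0 (1 : Matrix (Fin r₀) (Fin r₀) F)).map algFn =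
          Matrix.fromBlocks (S''.map algFn) 0 0 1 := by
        rw [Matrix.fromBlocks_map]
        rw [Matrix.map_zero algFn (map_zero algFn), Matrix.map_zero algFn (map_zero algFn),
          Matrix.map_one algFn (map_zero algFn) (map_one algFn)]
      rw [h6, Matrix.fromBlocks_multiply]
      simp only [Matrix.mul_zero, Matrix.zero_mul, Matrix.mul_one, Matrix.one_mul, add_zero,
        zero_add]
      rw [heqn]
    rw [← Matrix.mul_assoc, c1, c2, c3, c4, hval, hπ]
    exact oplus_absorb L'' heq' heq0 (by omega)

end Main
/-- a full linear matrix stably associated to a nonconstant polynomial can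
be brought, by a unit `U` on the left and an invertible scalar matrix `S` on the right,
to the form `L' ⊕ I_r` with `L'` a full right monic linear matrix and `r < d`; moreover
`r > 0` when `L` is not right monic. -/
theorem full_to_right_monic {F : Type*} [Field F] {n d : ℕ}
    (L : Matrix (Fin d) (Fin d) (FreeAlgebra F (Fin n)))
    (hfull : IsFullMat L) (hlin : IsLinearMat L)
    (f : FreeAlgebra F (Fin n)) (hdeg : 1 ≤ ncDeg f)
    (hassoc : StableAssoc (toMat1 f) L) :
    ∃ (e r : ℕ) (heq : e + r = d)
      (U : Matrix (Fin d) (Fin d) (FreeAlgebra F (Fin n)))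
      (S : Matrix (Fin d) (Fin d) F)
      (L' : Matrix (Fin e) (Fin e) (FreeAlgebra F (Fin n))),
      0 < e ∧ IsUnit U ∧ IsUnit S ∧ IsFullMat L' ∧ IsRightMonicLinear L' ∧
      U * L * S.map (algebraMap F (FreeAlgebra F (Fin n))) =
        Matrix.reindex (finCongr heq) (finCongr heq) (oplusId L' r) ∧
      (¬ IsRightMonicLinear L → 0 < r) := by
  have hnu : ¬ IsUnit L := by
    intro hL
    obtain ⟨t, t', ht, ht', h, P, Q, hP, hQ, hE⟩ := hassoc
    have h1 : IsUnit (oplusId L t') := isUnit_oplusId hL t'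
    have h2 : IsUnit (Matrix.reindex (finCongr h) (finCongr h) (oplusId L t')) := by
      rw [Matrix.reindex_apply]
      exact isUnit_submatrix_equiv (finCongr h).symm h1
    have h3 : IsUnit (oplusId (toMat1 f) t) := by
      rw [hE]
      exact (hP.mul h2).mul hQ
    have h4 : IsUnit f := isUnit_of_oplus_toMat1 h3
    have h5 := ncDeg_eq_zero_of_isUnit h4
    omega
  exact aux_main d L hfull hlin hnu
end

section
/- (Matrix Product Trivialization) Let A ∈ F⟨X⟩^{m×n} and B ∈ F⟨X⟩^{n×s} be matrices of polynomials such that A·B = 0. Then there exists a unit P ∈ F⟨X⟩^{n×n} such that for every index i ∈ [n], either the i-th column of the product A·P is all zeros or the i-th row of the product P^{−1}·B is all zeros. -/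
open Matrix BigOperators

namespace MPT

variable {K : ℕ}

/-- big-endian base-(K+2) value of a word, digits `a+1 ∈ [1, K]`. -/
def nuL : List (Fin K) → ℕ
  | [] => 0
  | a :: l => (a.val + 1) * (K+2) ^ l.length + nuL l

theorem nuL_append (u v : List (Fin K)) :
    nuL (u ++ v) = nuL u * (K+2) ^ v.length + nuL v := by
  induction u with
  | nil => simp [nuL]
  | cons a u ih =>
    show (a.val + 1) * (K+2) ^ (u ++ v).length + nuL (u ++ v)
      = ((a.val + 1) * (K+2) ^ u.length + nuL u) * (K+2) ^ v.length + nuL v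
    rw [ih, List.length_append, pow_add]
    ring

theorem nuL_lt (l : List (Fin K)) : nuL l < (K+2) ^ l.length := by
  induction l with
  | nil => simp [nuL]
  | cons a l ih =>
    have ha : a.val + 1 ≤ K + 1 := by omega
    calc nuL (a :: l) = (a.val + 1) * (K+2) ^ l.length + nuL l := rfl
      _ < (a.val + 1) * (K+2) ^ l.length + (K+2) ^ l.length := by omega
      _ = (a.val + 2) * (K+2) ^ l.length := by ring
      _ ≤ (K + 2) * (K+2) ^ l.length := by
          exact Nat.mul_le_mul_right _ (by omega)
      _ = (K+2) ^ (a :: l).length := by rw [List.length_cons]; ring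

theorem le_nuL (l : List (Fin K)) (h : l ≠ []) : (K+2) ^ (l.length - 1) ≤ nuL l := by
  cases l with
  | nil => simp at h
  | cons a l =>
    have : (K+2) ^ l.length ≤ (a.val + 1) * (K+2) ^ l.length := by
      exact Nat.le_mul_of_pos_left _ (by omega)
    simp only [nuL, List.length_cons, Nat.add_sub_cancel]
    omega

theorem nuL_lt_of_length_lt {u v : List (Fin K)} (h : u.length < v.length) :
    nuL u < nuL v := by
  have hv : v ≠ [] := by intro hv; subst hv; simp at h
  calc nuL u < (K+2) ^ u.length := nuL_lt u
    _ ≤ (K+2) ^ (v.length - 1) := Nat.pow_le_pow_right (by omega) (by omega)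
    _ ≤ nuL v := le_nuL v hv

theorem length_le_of_nuL_lt {u v : List (Fin K)} (h : nuL u < nuL v) :
    u.length ≤ v.length := by
  by_contra hc
  push_neg at hc
  exact absurd (nuL_lt_of_length_lt (u := v) (v := u) (by omega)) (by omega)

theorem nuL_injective : Function.Injective (nuL (K := K)) := by
  intro u v h
  have hlen : u.length = v.length := by
    rcases Nat.lt_trichotomy u.length v.length with h1 | h1 | h1
    · exact absurd (nuL_lt_of_length_lt h1) (by omega)
    · exact h1
    · exact absurd (nuL_lt_of_length_lt h1) (by omega)
  induction u generalizing v with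
  | nil => cases v with
    | nil => rfl
    | cons b v => simp at hlen
  | cons a u ih =>
    cases v with
    | nil => simp at hlen
    | cons b v =>
      simp only [List.length_cons, Nat.add_right_cancel_iff] at hlen
      simp only [nuL, hlen] at h
      have hu := nuL_lt u
      have hv := nuL_lt v
      rw [hlen] at hu
      -- (a+1)*d + nuL u = (b+1)*d + nuL v with nuL u, nuL v < d
      have hd : 0 < (K+2) ^ v.length := Nat.pow_pos (by omega)
      have hab : a.val = b.val := by
        have h1 : ((a.val + 1) * (K+2) ^ v.length + nuL u) / (K+2) ^ v.length = a.val + 1 := by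
          rw [Nat.add_comm, Nat.add_mul_div_right _ _ hd, Nat.div_eq_of_lt hu]; omega
        have h2 : ((b.val + 1) * (K+2) ^ v.length + nuL v) / (K+2) ^ v.length = b.val + 1 := by
          rw [Nat.add_comm, Nat.add_mul_div_right _ _ hd, Nat.div_eq_of_lt hv]; omega
        rw [h] at h1; rw [h1] at h2; omega
      have hab' : a = b := Fin.ext hab
      subst hab'
      have huv : nuL u = nuL v := by omega
      rw [ih huv hlen]

def nu (w : FreeMonoid (Fin K)) : ℕ := nuL (FreeMonoid.toList w)

theorem nu_injective : Function.Injective (nu (K := K)) := fun u v h =>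
  FreeMonoid.toList.injective (nuL_injective h)

theorem nu_mul (u v : FreeMonoid (Fin K)) :
    nu (u * v) = nuL u.toList * (K+2) ^ v.toList.length + nuL v.toList := by
  show nuL (u.toList ++ v.toList) = _
  exact nuL_append _ _

theorem length_toList_mul (u v : FreeMonoid (Fin K)) :
    (u * v).toList.length = u.toList.length + v.toList.length := by
  show (u.toList ++ v.toList).length = _
  simp

theorem nu_mul_lt_left {u u' : FreeMonoid (Fin K)} (h : nu u < nu u') (w : FreeMonoid (Fin K)) :
    nu (u * w) < nu (u' * w) := by
  rw [nu_mul, nu_mul]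
  have : nuL u.toList < nuL u'.toList := h
  have hp : 0 < (K+2) ^ w.toList.length := Nat.pow_pos (by omega)
  have := Nat.mul_lt_mul_of_lt_of_le this (le_refl ((K+2) ^ w.toList.length)) hp
  omega

theorem nu_mul_lt_right {v v' : FreeMonoid (Fin K)} (h : nu v < nu v') (w : FreeMonoid (Fin K)) :
    nu (w * v) < nu (w * v') := by
  rcases eq_or_ne v.toList.length v'.toList.length with hl | hl
  · rw [nu_mul, nu_mul, hl]
    have : nuL v.toList < nuL v'.toList := h
    omega
  · have hlt : v.toList.length < v'.toList.length :=
      lt_of_le_of_ne (length_le_of_nuL_lt h) hl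
    exact nuL_lt_of_length_lt (by rw [length_toList_mul, length_toList_mul]; omega)

theorem nu_mul_le_left {u u' : FreeMonoid (Fin K)} (h : nu u ≤ nu u') (w : FreeMonoid (Fin K)) :
    nu (u * w) ≤ nu (u' * w) := by
  rcases eq_or_lt_of_le h with he | hlt
  · rw [nu_injective he]
  · exact le_of_lt (nu_mul_lt_left hlt w)

theorem nu_mul_le_right {v v' : FreeMonoid (Fin K)} (h : nu v ≤ nu v') (w : FreeMonoid (Fin K)) :
    nu (w * v) ≤ nu (w * v') := by
  rcases eq_or_lt_of_le h with he | hlt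
  · rw [nu_injective he]
  · exact le_of_lt (nu_mul_lt_right hlt w)

section Algebra

variable {F : Type*} [Field F]

abbrev MA (F : Type*) [Field F] (K : ℕ) := MonoidAlgebra F (FreeMonoid (Fin K))

instance instCoeFunMA {F : Type*} [Field F] {K : ℕ} : CoeFun (MA F K) (fun _ => FreeMonoid (Fin K) → F) :=
  ⟨fun f => f.coeff⟩

noncomputable def lw (f : MA F K) : FreeMonoid (Fin K) :=
  if h : f.coeff.support.Nonempty then (Finset.exists_mem_eq_sup f.coeff.support h nu).choose else 1

theorem lw_spec {f : MA F K} (hf : f ≠ 0) :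
    lw f ∈ f.coeff.support ∧ f.coeff.support.sup nu = nu (lw f) := by
  have hne : f.coeff.support.Nonempty := Finsupp.support_nonempty_iff.2 (MonoidAlgebra.coeff_eq_zero.not.2 hf)
  rw [lw, dif_pos hne]
  exact (Finset.exists_mem_eq_sup f.coeff.support hne nu).choose_spec

theorem lw_mem {f : MA F K} (hf : f ≠ 0) : lw f ∈ f.coeff.support := (lw_spec hf).1

theorem coeff_lw_ne_zero {f : MA F K} (hf : f ≠ 0) : f (lw f) ≠ 0 :=
  Finsupp.mem_support_iff.1 (lw_mem hf)

theorem nu_le_lw {f : MA F K} (hf : f ≠ 0) {w : FreeMonoid (Fin K)} (hw : w ∈ f.coeff.support) :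
    nu w ≤ nu (lw f) := (lw_spec hf).2 ▸ Finset.le_sup hw

theorem nu_lt_lw {f : MA F K} (hf : f ≠ 0) {w : FreeMonoid (Fin K)} (hw : w ∈ f.coeff.support)
    (hne : w ≠ lw f) : nu w < nu (lw f) :=
  lt_of_le_of_ne (nu_le_lw hf hw) (fun h => hne (nu_injective h))

theorem coeff_mul_lt (f g : MA F K) (x : FreeMonoid (Fin K))
    (h : ∀ u ∈ f.coeff.support, ∀ v ∈ g.coeff.support, nu (u*v) < nu x) : (f * g) x = 0 := by
  classical
  rw [MonoidAlgebra.mul_apply]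
  rw [Finsupp.sum]
  refine Finset.sum_eq_zero fun u hu => ?_
  rw [Finsupp.sum]
  refine Finset.sum_eq_zero fun v hv => ?_
  rw [if_neg]
  intro he
  exact absurd (he ▸ h u hu v hv) (lt_irrefl _)

theorem coeff_mul_lw {f g : MA F K} (hf : f ≠ 0) (hg : g ≠ 0) :
    (f * g) (lw f * lw g) = f (lw f) * g (lw g) := by
  classical
  rw [MonoidAlgebra.mul_apply, Finsupp.sum]
  rw [Finset.sum_eq_single (lw f)]
  · rw [Finsupp.sum, Finset.sum_eq_single (lw g)]
    · rw [if_pos rfl]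
    · intro v hv hne
      rw [if_neg]
      intro he
      exact hne (mul_left_cancel he)
    · intro h; exact absurd (lw_mem hg) h
  · intro u hu hne
    rw [Finsupp.sum]
    refine Finset.sum_eq_zero fun v hv => ?_
    rw [if_neg]
    intro he
    have h1 : nu (u * v) < nu (lw f * v) := nu_mul_lt_left (nu_lt_lw hf hu hne) v
    have h2 : nu (lw f * v) ≤ nu (lw f * lw g) := nu_mul_le_right (nu_le_lw hg hv) _
    rw [he] at h1
    omega
  · intro h; exact absurd (lw_mem hf) h

theorem mem_support_mul {f g : MA F K} {w : FreeMonoid (Fin K)}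
    (hw : w ∈ (f * g).coeff.support) : ∃ u ∈ f.coeff.support, ∃ v ∈ g.coeff.support, u * v = w := by
  classical
  have := MonoidAlgebra.support_coeff_mul_subset f g hw
  rwa [Finset.mem_mul] at this

/-- coefficient of `lw f * u` in `f * single u c`. -/
theorem coeff_mul_single_lw {f : MA F K} (hf : f ≠ 0) (u : FreeMonoid (Fin K)) (c : F) :
    (f * MonoidAlgebra.single u c) (lw f * u) = f (lw f) * c :=
  MonoidAlgebra.coeff_mul_single_eq_coeff_mul (lw f) fun a _ => by
    constructor
    · intro h; exact mul_right_cancel h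
    · intro h; rw [h]

end Algebra
end MPT

namespace MPT

open MonoidAlgebra

variable {F : Type*} [Field F] {K : ℕ}

theorem freeMonoid_eq_of_mul_eq_mul {α : Type*} {a b c d : FreeMonoid α} (h : a * b = c * d) :
    (∃ u, c = a * u ∧ b = u * d) ∨ (∃ u, a = c * u ∧ d = u * b) := by
  have h' : a.toList ++ b.toList = c.toList ++ d.toList := congrArg FreeMonoid.toList h
  rcases List.append_eq_append_iff.1 h' with ⟨u, hu1, hu2⟩ | ⟨u, hu1, hu2⟩
  · refine Or.inl ⟨FreeMonoid.ofList u, ?_, ?_⟩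
    · apply FreeMonoid.toList.injective; exact hu1
    · apply FreeMonoid.toList.injective; exact hu2
  · refine Or.inr ⟨FreeMonoid.ofList u, ?_, ?_⟩
    · apply FreeMonoid.toList.injective; exact hu1
    · apply FreeMonoid.toList.injective; exact hu2

theorem core_step {p : ℕ} (f g : Fin p → MA F K)
    (hrel : ∑ i, f i * g i = 0)
    (i0 : Fin p) (hf0 : f i0 ≠ 0) (hg0 : g i0 ≠ 0) :
    ∃ (i j : Fin p), i ≠ j ∧ f i ≠ 0 ∧ g i ≠ 0 ∧ f j ≠ 0 ∧ g j ≠ 0 ∧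
      ∃ (u : FreeMonoid (Fin K)) (c : F),
        lw (f i) = lw (f j) * u ∧ lw (g j) = u * lw (g i) ∧
        (∀ w ∈ (f i - f j * MonoidAlgebra.single u c).coeff.support, nu w < nu (lw (f i))) ∧
        (∀ w ∈ (g j + MonoidAlgebra.single u c * g i).coeff.support, nu w ≤ nu (lw (g j))) := by
  classical
  set T : Finset (Fin p) := Finset.univ.filter (fun i => f i ≠ 0 ∧ g i ≠ 0) with hT
  have hi0T : i0 ∈ T := by simp [hT, hf0, hg0]
  have hTne : T.Nonempty := ⟨i0, hi0T⟩
  set φ : Fin p → ℕ := fun i => nu (lw (f i) * lw (g i)) with hφ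
  obtain ⟨istar, histar, hsup⟩ := Finset.exists_mem_eq_sup T hTne φ
  set w : FreeMonoid (Fin K) := lw (f istar) * lw (g istar) with hw
  have hmemT : ∀ {i}, i ∈ T → f i ≠ 0 ∧ g i ≠ 0 := by
    intro i hi; simpa [hT] using hi
  set S : Finset (Fin p) := T.filter (fun i => lw (f i) * lw (g i) = w) with hS
  have histarS : istar ∈ S := by simp [hS, histar, hw]
  -- the sum of leading coefficients over S vanishes
  have hC : ∀ i, i ∈ S → (f i * g i) w = (f i) (lw (f i)) * (g i) (lw (g i)) := by
    intro i hi
    rw [Finset.mem_filter] at hi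
    obtain ⟨hfi, hgi⟩ := hmemT hi.1
    rw [← hi.2]
    exact coeff_mul_lw hfi hgi
  have hZ : ∀ i, i ∉ S → (f i * g i) w = 0 := by
    intro i hi
    by_cases hiT : i ∈ T
    · obtain ⟨hfi, hgi⟩ := hmemT hiT
      have hne : lw (f i) * lw (g i) ≠ w := by
        intro he; exact hi (by simp [hS, hiT, he])
      have hφlt : φ i < nu w := by
        have h1 : φ i ≤ nu w := by
          have h2 := Finset.le_sup (f := φ) hiT
          rw [hsup] at h2
          exact h2
        rcases lt_or_eq_of_le h1 with h | h
        · exact h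
        · exact absurd (nu_injective h) hne
      apply coeff_mul_lt
      intro u hu v hv
      calc nu (u * v) ≤ nu (lw (f i) * v) := nu_mul_le_left (nu_le_lw hfi hu) v
        _ ≤ nu (lw (f i) * lw (g i)) := nu_mul_le_right (nu_le_lw hgi hv) _
        _ < nu w := hφlt
    · have : f i = 0 ∨ g i = 0 := by
        by_contra hc
        push_neg at hc
        exact hiT (by simp [hT, hc.1, hc.2])
      rcases this with h | h <;> simp [h]
  have hsum0 : ∑ i ∈ S, (f i) (lw (f i)) * (g i) (lw (g i)) = 0 := by
    have h0 : (∑ i, f i * g i) w = 0 := by rw [hrel]; rfl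
    rw [MonoidAlgebra.coeff_sum, Finsupp.finset_sum_apply] at h0
    rw [← h0]
    symm
    rw [← Finset.sum_subset (Finset.subset_univ S) (fun x _ hx => hZ x hx)]
    exact Finset.sum_congr rfl hC
  -- there are two distinct indices in S
  have histar_ne : (f istar) (lw (f istar)) * (g istar) (lw (g istar)) ≠ 0 := by
    obtain ⟨hfi, hgi⟩ := hmemT histar
    exact mul_ne_zero (coeff_lw_ne_zero hfi) (coeff_lw_ne_zero hgi)
  have hj : ∃ j ∈ S, j ≠ istar := by
    by_contra hc
    push_neg at hc
    have hSeq : S = {istar} := by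
      apply Finset.eq_singleton_iff_unique_mem.2
      exact ⟨histarS, hc⟩
    rw [hSeq, Finset.sum_singleton] at hsum0
    exact histar_ne hsum0
  obtain ⟨j', hj'S, hj'ne⟩ := hj
  have hj'w : lw (f j') * lw (g j') = w := (Finset.mem_filter.1 hj'S).2
  have histw : lw (f istar) * lw (g istar) = w := (Finset.mem_filter.1 histarS).2
  -- main construction given indices i j with the factorization
  have main : ∀ (i j : Fin p), i ≠ j → i ∈ T → j ∈ T →
      ∀ u, lw (f i) = lw (f j) * u → lw (g j) = u * lw (g i) →
      ∃ (i' j' : Fin p), i' ≠ j' ∧ f i' ≠ 0 ∧ g i' ≠ 0 ∧ f j' ≠ 0 ∧ g j' ≠ 0 ∧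
      ∃ (u : FreeMonoid (Fin K)) (c : F),
        lw (f i') = lw (f j') * u ∧ lw (g j') = u * lw (g i') ∧
        (∀ w ∈ (f i' - f j' * MonoidAlgebra.single u c).coeff.support, nu w < nu (lw (f i'))) ∧
        (∀ w ∈ (g j' + MonoidAlgebra.single u c * g i').coeff.support, nu w ≤ nu (lw (g j'))) := by
    intro i j hij hiT hjT u hfu hgu
    obtain ⟨hfi, hgi⟩ := hmemT hiT
    obtain ⟨hfj, hgj⟩ := hmemT hjT
    set c : F := (f i) (lw (f i)) * ((f j) (lw (f j)))⁻¹ with hc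
    refine ⟨i, j, hij, hfi, hgi, hfj, hgj, u, c, hfu, hgu, ?_, ?_⟩
    · -- strict decrease for the new f i
      intro w' hw'
      have hcoeff : (f i - f j * MonoidAlgebra.single u c) (lw (f i)) = 0 := by
        have h1 : (f j * MonoidAlgebra.single u c) (lw (f i)) = (f j) (lw (f j)) * c := by
          rw [hfu]; exact coeff_mul_single_lw hfj u c
        have h2 : (f i - f j * MonoidAlgebra.single u c) (lw (f i))
            = (f i) (lw (f i)) - (f j * MonoidAlgebra.single u c) (lw (f i)) := by
          exact Finsupp.sub_apply _ _ _
        rw [h2, h1, hc]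
        have hfjc : (f j) (lw (f j)) ≠ 0 := coeff_lw_ne_zero hfj
        field_simp
        ring
      have hne : w' ≠ lw (f i) := by
        intro he
        rw [he] at hw'
        exact (Finsupp.mem_support_iff.1 hw') hcoeff
      have := Finsupp.support_sub hw'
      rcases Finset.mem_union.1 this with h | h
      · exact nu_lt_lw hfi h hne
      · obtain ⟨α, hα, β, hβ, hαβ⟩ := mem_support_mul h
        have hβu : β = u := by
          have := Finsupp.support_single_subset hβ
          simpa using this
        subst hβu
        have h1 : nu w' ≤ nu (lw (f i)) := by
          rw [← hαβ, hfu]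
          exact nu_mul_le_left (nu_le_lw hfj hα) β
        rcases lt_or_eq_of_le h1 with h2 | h2
        · exact h2
        · exact absurd (nu_injective h2) hne
    · -- non-increase for the new g j
      intro w' hw'
      have := Finsupp.support_add hw'
      rcases Finset.mem_union.1 this with h | h
      · exact nu_le_lw hgj h
      · obtain ⟨α, hα, β, hβ, hαβ⟩ := mem_support_mul h
        have hαu : α = u := by
          have := Finsupp.support_single_subset hα
          simpa using this
        subst hαu
        rw [← hαβ, hgu]
        exact nu_mul_le_right (nu_le_lw hgi hβ) α
  -- apply with the two cases of the factorization
  have heq : lw (f istar) * lw (g istar) = lw (f j') * lw (g j') := by rw [histw, hj'w]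
  rcases freeMonoid_eq_of_mul_eq_mul heq with ⟨u, hu1, hu2⟩ | ⟨u, hu1, hu2⟩
  · exact main j' istar hj'ne (Finset.mem_filter.1 hj'S).1 (Finset.mem_filter.1 histarS).1
      u hu1 hu2
  · exact main istar j' (Ne.symm hj'ne) (Finset.mem_filter.1 histarS).1
      (Finset.mem_filter.1 hj'S).1 u hu1 hu2

end MPT

namespace MPT
section Mat

open MonoidAlgebra

variable {F : Type*} [Field F] {k m p s : ℕ}

def emX (k m s : ℕ) (i : Fin k) : Fin (k + m + s) := ⟨i.val, by omega⟩
def emT (k m s : ℕ) (j : Fin m) : Fin (k + m + s) := ⟨k + j.val, by omega⟩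
def emU (k m s : ℕ) (l : Fin s) : Fin (k + m + s) := ⟨k + m + l.val, by omega⟩

theorem emX_injective : Function.Injective (emX k m s) := fun a b h =>
  Fin.ext (by simpa [emX] using congrArg Fin.val h)

theorem emT_injective : Function.Injective (emT k m s) := fun a b h => by
  have := congrArg Fin.val h
  simp only [emT] at this
  exact Fin.ext (by omega)

theorem emU_injective : Function.Injective (emU k m s) := fun a b h => by
  have := congrArg Fin.val h
  simp only [emU] at this
  exact Fin.ext (by omega)

theorem freeMonoid_map_injective {α β : Type*} {f : α → β} (hf : Function.Injective f) :
    Function.Injective (FreeMonoid.map f) := by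
  intro u v h
  apply FreeMonoid.toList.injective
  have h2 := congrArg FreeMonoid.toList h
  rw [FreeMonoid.toList_map, FreeMonoid.toList_map] at h2
  exact List.map_injective_iff.2 hf h2

theorem head_mul_eq {α : Type*} {x y : α} {a b : FreeMonoid α}
    (h : FreeMonoid.of x * a = FreeMonoid.of y * b) : x = y ∧ a = b := by
  have h2 := congrArg FreeMonoid.toList h
  simp only [FreeMonoid.toList_mul, FreeMonoid.toList_of, List.singleton_append,
    List.cons.injEq] at h2
  exact ⟨h2.1, FreeMonoid.toList.injective h2.2⟩

theorem mul_last_eq {α : Type*} {x y : α} {a b : FreeMonoid α}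
    (h : a * FreeMonoid.of x = b * FreeMonoid.of y) : x = y ∧ a = b := by
  have h2 := congrArg FreeMonoid.toList h
  simp only [FreeMonoid.toList_mul, FreeMonoid.toList_of] at h2
  have h3 := List.append_inj' h2 rfl
  obtain ⟨h4, h5⟩ := h3
  simp only [List.cons.injEq] at h5
  exact ⟨h5.1, FreeMonoid.toList.injective h4⟩

noncomputable def iota (k m s : ℕ) : MA F k →+* MA F (k+m+s) :=
  MonoidAlgebra.mapDomainRingHom F (FreeMonoid.map (emX k m s))

theorem iota_apply (f : MA F k) :
    iota k m s f = MonoidAlgebra.ofCoeff (Finsupp.mapDomain (FreeMonoid.map (emX k m s)) f.coeff) := rfl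

theorem iota_injective : Function.Injective (iota (F := F) k m s) := by
  intro a b h
  rw [iota_apply, iota_apply] at h
  exact MonoidAlgebra.coeff_injective (Finsupp.mapDomain_injective (freeMonoid_map_injective emX_injective) (congrArg MonoidAlgebra.coeff h))

theorem iota_coeff (f : MA F k) (w : FreeMonoid (Fin k)) :
    (iota k m s f) (FreeMonoid.map (emX k m s) w) = f w := by
  rw [iota_apply]
  exact Finsupp.mapDomain_apply (freeMonoid_map_injective emX_injective) f.coeff w

theorem iota_ne_zero {f : MA F k} (hf : f ≠ 0) : iota (F := F) k m s f ≠ 0 := by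
  intro h
  exact hf (iota_injective (by rw [h, map_zero]))

theorem mem_support_iota {f : MA F k} {w' : FreeMonoid (Fin (k+m+s))}
    (h : w' ∈ (iota (F := F) k m s f).coeff.support) :
    ∃ w ∈ f.coeff.support, w' = FreeMonoid.map (emX k m s) w := by
  classical
  rw [iota_apply] at h
  have h2 := Finsupp.mapDomain_support h
  rw [Finset.mem_image] at h2
  obtain ⟨w, hw, hww⟩ := h2
  exact ⟨w, hw, hww.symm⟩

noncomputable def av (s : ℕ) (A : Matrix (Fin m) (Fin p) (MA F k)) (i : Fin p) :
    MA F (k+m+s) :=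
  ∑ j, MonoidAlgebra.single (FreeMonoid.of (emT k m s j)) (1:F) * iota k m s (A j i)

noncomputable def bv (m : ℕ) (B : Matrix (Fin p) (Fin s) (MA F k)) (i : Fin p) :
    MA F (k+m+s) :=
  ∑ l, iota k m s (B i l) * MonoidAlgebra.single (FreeMonoid.of (emU k m s l)) (1:F)

theorem mem_support_av {A : Matrix (Fin m) (Fin p) (MA F k)} {i : Fin p}
    {w' : FreeMonoid (Fin (k+m+s))} (h : w' ∈ (av s A i).coeff.support) :
    ∃ (j : Fin m) (w : FreeMonoid (Fin k)), w ∈ (A j i).coeff.support ∧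
      w' = FreeMonoid.of (emT k m s j) * FreeMonoid.map (emX k m s) w := by
  classical
  obtain ⟨j, _, hj⟩ := Finsupp.mem_support_finset_sum _ (by rw [av, MonoidAlgebra.coeff_sum] at h; exact h)
  obtain ⟨u, hu, v, hv, huv⟩ := mem_support_mul hj
  have hu' : u = FreeMonoid.of (emT k m s j) := by
    have := Finsupp.support_single_subset hu
    simpa using this
  obtain ⟨w, hw, rfl⟩ := mem_support_iota hv
  exact ⟨j, w, hw, by rw [← huv, hu']⟩

theorem mem_support_bv {B : Matrix (Fin p) (Fin s) (MA F k)} {i : Fin p}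
    {w' : FreeMonoid (Fin (k+m+s))} (h : w' ∈ (bv m B i).coeff.support) :
    ∃ (l : Fin s) (w : FreeMonoid (Fin k)), w ∈ (B i l).coeff.support ∧
      w' = FreeMonoid.map (emX k m s) w * FreeMonoid.of (emU k m s l) := by
  classical
  obtain ⟨l, _, hl⟩ := Finsupp.mem_support_finset_sum _ (by rw [bv, MonoidAlgebra.coeff_sum] at h; exact h)
  obtain ⟨u, hu, v, hv, huv⟩ := mem_support_mul hl
  have hv' : v = FreeMonoid.of (emU k m s l) := by
    have := Finsupp.support_single_subset hv
    simpa using this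
  obtain ⟨w, hw, rfl⟩ := mem_support_iota hu
  exact ⟨l, w, hw, by rw [← huv, hv']⟩

theorem av_coeff (A : Matrix (Fin m) (Fin p) (MA F k)) (i : Fin p) (j : Fin m)
    (w : FreeMonoid (Fin k)) :
    (av s A i) (FreeMonoid.of (emT k m s j) * FreeMonoid.map (emX k m s) w)
      = (A j i) w := by
  classical
  rw [av, MonoidAlgebra.coeff_sum, Finsupp.finset_sum_apply]
  rw [Finset.sum_eq_single j]
  · have h1 := MonoidAlgebra.coeff_single_mul_eq_mul_coeff (r := (1:F)) (x := iota k m s (A j i))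
      (m := FreeMonoid.of (emT k m s j))
      (m₁ := FreeMonoid.of (emT k m s j) * FreeMonoid.map (emX k m s) w)
      (FreeMonoid.map (emX k m s) w)
      (fun a _ => ⟨fun h => mul_left_cancel h, fun h => by rw [h]⟩)
    rw [h1, one_mul, iota_coeff]
  · intro j' _ hne'
    apply MonoidAlgebra.single_mul_apply_of_not_exists_mul
    rintro ⟨d, hd⟩
    exact hne' (emT_injective (head_mul_eq hd).1.symm)
  · intro h; exact absurd (Finset.mem_univ j) h

theorem bv_coeff (B : Matrix (Fin p) (Fin s) (MA F k)) (i : Fin p) (l : Fin s)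
    (w : FreeMonoid (Fin k)) :
    (bv m B i) (FreeMonoid.map (emX k m s) w * FreeMonoid.of (emU k m s l))
      = (B i l) w := by
  classical
  rw [bv, MonoidAlgebra.coeff_sum, Finsupp.finset_sum_apply]
  rw [Finset.sum_eq_single l]
  · have h1 := MonoidAlgebra.coeff_mul_single_eq_coeff_mul (r := (1:F)) (x := iota k m s (B i l))
      (m := FreeMonoid.of (emU k m s l))
      (m₁ := FreeMonoid.map (emX k m s) w * FreeMonoid.of (emU k m s l))
      (FreeMonoid.map (emX k m s) w)
      (fun a _ => ⟨fun h => mul_right_cancel h, fun h => by rw [h]⟩)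
    rw [h1, mul_one, iota_coeff]
  · intro l' _ hne'
    apply MonoidAlgebra.mul_single_apply_of_not_exists_mul
    rintro ⟨d, hd⟩
    exact hne' (emU_injective (mul_last_eq hd).1.symm)
  · intro h; exact absurd (Finset.mem_univ l) h

theorem av_eq_zero_iff {A : Matrix (Fin m) (Fin p) (MA F k)} {i : Fin p} :
    av s A i = 0 ↔ ∀ j, A j i = 0 := by
  constructor
  · intro h j
    by_contra hne
    obtain ⟨w, hw⟩ := Finsupp.support_nonempty_iff.2 (MonoidAlgebra.coeff_eq_zero.not.2 hne)
    have hc := av_coeff (s := s) A i j w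
    rw [h] at hc
    exact (Finsupp.mem_support_iff.1 hw) (by simpa using hc.symm)
  · intro h
    rw [av]
    apply Finset.sum_eq_zero
    intro j _
    rw [h j, map_zero, mul_zero]

theorem bv_eq_zero_iff {B : Matrix (Fin p) (Fin s) (MA F k)} {i : Fin p} :
    bv m B i = 0 ↔ ∀ l, B i l = 0 := by
  constructor
  · intro h l
    by_contra hne
    obtain ⟨w, hw⟩ := Finsupp.support_nonempty_iff.2 (MonoidAlgebra.coeff_eq_zero.not.2 hne)
    have hc := bv_coeff (m := m) B i l w
    rw [h] at hc
    exact (Finsupp.mem_support_iff.1 hw) (by simpa using hc.symm)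
  · intro h
    rw [bv]
    apply Finset.sum_eq_zero
    intro l _
    rw [h l, map_zero, zero_mul]

theorem rel_av_bv {A : Matrix (Fin m) (Fin p) (MA F k)} {B : Matrix (Fin p) (Fin s) (MA F k)}
    (hAB : A * B = 0) : ∑ i, av s A i * bv m B i = (0 : MA F (k+m+s)) := by
  classical
  have hterm : ∀ i, av s A i * bv m B i =
      ∑ j, ∑ l, MonoidAlgebra.single (FreeMonoid.of (emT k m s j)) (1:F) *
        iota k m s (A j i * B i l) *
        MonoidAlgebra.single (FreeMonoid.of (emU k m s l)) (1:F) := by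
    intro i
    rw [av, bv, Finset.sum_mul_sum]
    refine Finset.sum_congr rfl fun j _ => Finset.sum_congr rfl fun l _ => ?_
    rw [_root_.map_mul]
    noncomm_ring
  rw [Finset.sum_congr rfl fun i _ => hterm i]
  rw [Finset.sum_comm]
  refine Finset.sum_eq_zero fun j _ => ?_
  rw [Finset.sum_comm]
  refine Finset.sum_eq_zero fun l _ => ?_
  have : ∑ i, MonoidAlgebra.single (FreeMonoid.of (emT k m s j)) (1:F) *
        iota k m s (A j i * B i l) *
        MonoidAlgebra.single (FreeMonoid.of (emU k m s l)) (1:F)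
      = MonoidAlgebra.single (FreeMonoid.of (emT k m s j)) (1:F) *
        iota k m s ((A * B) j l) *
        MonoidAlgebra.single (FreeMonoid.of (emU k m s l)) (1:F) := by
    rw [Matrix.mul_apply, map_sum, ← Finset.sum_mul, ← Finset.mul_sum]
  rw [this, hAB]
  simp

end Mat
end MPT

namespace MPT
section Elem

open MonoidAlgebra

variable {F : Type*} [Field F] {k m p s : ℕ}

theorem mul_std_apply {R : Type*} [Semiring R] (A : Matrix (Fin m) (Fin p) R)
    (j i : Fin p) (r : R) (x : Fin m) (y : Fin p) :
    (A * Matrix.single j i r) x y = if y = i then A x j * r else 0 := by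
  rw [Matrix.mul_apply]
  rcases eq_or_ne y i with rfl | h
  · rw [Finset.sum_eq_single j]
    · simp [Matrix.single]
    · intro q _ hq
      simp [Matrix.single, Ne.symm hq]
    · intro h; exact absurd (Finset.mem_univ j) h
  · rw [if_neg h]
    apply Finset.sum_eq_zero
    intro q _
    simp [Matrix.single, Ne.symm h]

theorem std_mul_apply {R : Type*} [Semiring R] (B : Matrix (Fin p) (Fin s) R)
    (j i : Fin p) (r : R) (x : Fin p) (y : Fin s) :
    (Matrix.single j i r * B) x y = if x = j then r * B i y else 0 := by
  rw [Matrix.mul_apply]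
  rcases eq_or_ne x j with rfl | h
  · rw [Finset.sum_eq_single i]
    · simp [Matrix.single]
    · intro q _ hq
      simp [Matrix.single, Ne.symm hq]
    · intro h; exact absurd (Finset.mem_univ i) h
  · rw [if_neg h]
    apply Finset.sum_eq_zero
    intro q _
    simp [Matrix.single, Ne.symm h]

theorem elem_inv {R : Type*} [Ring R] {i j : Fin p} (hij : i ≠ j) (r : R) :
    ((1 : Matrix (Fin p) (Fin p) R) + Matrix.single j i r) *
      ((1 : Matrix (Fin p) (Fin p) R) + Matrix.single j i (-r)) = 1 := by
  have h0 : Matrix.single j i r * Matrix.single j i (-r)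
      = (0 : Matrix (Fin p) (Fin p) R) :=
    Matrix.single_mul_single_of_ne r j i j hij (-r)
  rw [mul_add, mul_one, add_mul, one_mul, h0, add_zero, add_assoc,
    ← Matrix.single_add]
  simp

theorem entry_mul_elem_ne {R : Type*} [Ring R] (A : Matrix (Fin m) (Fin p) R)
    (i j : Fin p) (r : R) {i' : Fin p} (h : i' ≠ i) (x : Fin m) :
    (A * ((1 : Matrix (Fin p) (Fin p) R) + Matrix.single j i r)) x i' = A x i' := by
  rw [Matrix.mul_add, Matrix.mul_one, Matrix.add_apply, mul_std_apply, if_neg h, add_zero]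

theorem entry_mul_elem_self {R : Type*} [Ring R] (A : Matrix (Fin m) (Fin p) R)
    (i j : Fin p) (r : R) (x : Fin m) :
    (A * ((1 : Matrix (Fin p) (Fin p) R) + Matrix.single j i r)) x i
      = A x i + A x j * r := by
  rw [Matrix.mul_add, Matrix.mul_one, Matrix.add_apply, mul_std_apply, if_pos rfl]

theorem entry_elem_mul_ne {R : Type*} [Ring R] (B : Matrix (Fin p) (Fin s) R)
    (i j : Fin p) (r : R) {j' : Fin p} (h : j' ≠ j) (y : Fin s) :
    (((1 : Matrix (Fin p) (Fin p) R) + Matrix.single j i r) * B) j' y = B j' y := by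
  rw [Matrix.add_mul, Matrix.one_mul, Matrix.add_apply, std_mul_apply, if_neg h, add_zero]

theorem entry_elem_mul_self {R : Type*} [Ring R] (B : Matrix (Fin p) (Fin s) R)
    (i j : Fin p) (r : R) (y : Fin s) :
    (((1 : Matrix (Fin p) (Fin p) R) + Matrix.single j i r) * B) j y
      = B j y + r * B i y := by
  rw [Matrix.add_mul, Matrix.one_mul, Matrix.add_apply, std_mul_apply, if_pos rfl]

theorem av_mul_elem_ne (A : Matrix (Fin m) (Fin p) (MA F k)) (i j : Fin p) (r : MA F k)
    {i' : Fin p} (h : i' ≠ i) :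
    av s (A * ((1 : Matrix (Fin p) (Fin p) (MA F k)) + Matrix.single j i r)) i'
      = av s A i' := by
  rw [av, av]
  exact Finset.sum_congr rfl fun j' _ => by rw [entry_mul_elem_ne A i j r h]

theorem av_mul_elem_self (A : Matrix (Fin m) (Fin p) (MA F k)) (i j : Fin p) (r : MA F k) :
    av s (A * ((1 : Matrix (Fin p) (Fin p) (MA F k)) + Matrix.single j i r)) i
      = av s A i + av s A j * iota k m s r := by
  rw [av, av, av]
  rw [Finset.sum_mul]
  rw [← Finset.sum_add_distrib]
  refine Finset.sum_congr rfl fun j' _ => ?_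
  rw [entry_mul_elem_self A i j r, map_add, _root_.map_mul, mul_add, mul_assoc]

theorem bv_elem_mul_ne (B : Matrix (Fin p) (Fin s) (MA F k)) (i j : Fin p) (r : MA F k)
    {j' : Fin p} (h : j' ≠ j) :
    bv m (((1 : Matrix (Fin p) (Fin p) (MA F k)) + Matrix.single j i r) * B) j'
      = bv m B j' := by
  rw [bv, bv]
  exact Finset.sum_congr rfl fun l _ => by rw [entry_elem_mul_ne B i j r h]

theorem bv_elem_mul_self (B : Matrix (Fin p) (Fin s) (MA F k)) (i j : Fin p) (r : MA F k) :
    bv m (((1 : Matrix (Fin p) (Fin p) (MA F k)) + Matrix.single j i r) * B) j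
      = bv m B j + iota k m s r * bv m B i := by
  rw [bv, bv, bv]
  rw [Finset.mul_sum]
  rw [← Finset.sum_add_distrib]
  refine Finset.sum_congr rfl fun l _ => ?_
  rw [entry_elem_mul_self B i j r, map_add, _root_.map_mul, add_mul, mul_assoc]

open scoped Classical in
noncomputable def tm (A : Matrix (Fin m) (Fin p) (MA F k))
    (B : Matrix (Fin p) (Fin s) (MA F k)) (i : Fin p) : ℕ :=
  if av s A i ≠ 0 ∧ bv m B i ≠ 0 then 1 + nu (lw (av s A i) * lw (bv m B i)) else 0

noncomputable def meas (A : Matrix (Fin m) (Fin p) (MA F k))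
    (B : Matrix (Fin p) (Fin s) (MA F k)) : ℕ :=
  ∑ i, tm A B i

end Elem
end MPT

namespace MPT
section Step

open MonoidAlgebra

variable {F : Type*} [Field F] {k m p s : ℕ}

theorem matrix_step (A : Matrix (Fin m) (Fin p) (MA F k))
    (B : Matrix (Fin p) (Fin s) (MA F k)) (hAB : A * B = 0) (i0 : Fin p)
    (h1 : av s A i0 ≠ 0) (h2 : bv m B i0 ≠ 0) :
    ∃ E Einv : Matrix (Fin p) (Fin p) (MA F k), E * Einv = 1 ∧ Einv * E = 1 ∧
      meas (A * E) (Einv * B) < meas A B := by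
  classical
  obtain ⟨i, j, hij, hfi, hgi, hfj, hgj, u, c, hfu, hgu, D1, D2⟩ :=
    core_step (av s A) (bv m B) (rel_av_bv hAB) i0 h1 h2
  -- extract the x-word u₀ underlying u
  obtain ⟨j1, w1, hw1, hw1e⟩ := mem_support_av (lw_mem hfi)
  obtain ⟨j2, w2, hw2, hw2e⟩ := mem_support_av (lw_mem hfj)
  have heads : FreeMonoid.of (emT k m s j1) * FreeMonoid.map (emX k m s) w1
      = FreeMonoid.of (emT k m s j2) * (FreeMonoid.map (emX k m s) w2 * u) := by
    rw [← mul_assoc, ← hw2e, ← hfu, hw1e]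
  have htail : FreeMonoid.map (emX k m s) w1 = FreeMonoid.map (emX k m s) w2 * u :=
    (head_mul_eq heads).2
  have hxword : ∃ u₀ : FreeMonoid (Fin k), u = FreeMonoid.map (emX k m s) u₀ := by
    have hlist : w1.toList.map (emX k m s)
        = w2.toList.map (emX k m s) ++ u.toList := by
      have := congrArg FreeMonoid.toList htail
      rwa [FreeMonoid.toList_map, FreeMonoid.toList_mul, FreeMonoid.toList_map] at this
    rcases List.map_eq_append_iff.1 hlist with ⟨l₁, l₂, hsplit, hl₁, hl₂⟩
    refine ⟨FreeMonoid.ofList l₂, ?_⟩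
    apply FreeMonoid.toList.injective
    rw [FreeMonoid.toList_map]
    exact hl₂.symm
  obtain ⟨u₀, rfl⟩ := hxword
  set r : MA F k := MonoidAlgebra.single u₀ c with hr
  have hiotar : iota (F := F) k m s r = MonoidAlgebra.single (FreeMonoid.map (emX k m s) u₀) c := by
    rw [hr, iota_apply]
    exact congrArg MonoidAlgebra.ofCoeff Finsupp.mapDomain_single
  set E : Matrix (Fin p) (Fin p) (MA F k) :=
    1 + Matrix.single j i (-r) with hE
  set Einv : Matrix (Fin p) (Fin p) (MA F k) :=
    1 + Matrix.single j i r with hEinv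
  have hEE : E * Einv = 1 := by
    rw [hE, hEinv]
    have := elem_inv (R := MA F k) hij (-r)
    rwa [neg_neg] at this
  have hEE' : Einv * E = 1 := by
    rw [hE, hEinv]
    exact elem_inv (R := MA F k) hij r
  refine ⟨E, Einv, hEE, hEE', ?_⟩
  -- entrywise descriptions
  have hAi : av s (A * E) i
      = av s A i - av s A j * MonoidAlgebra.single (FreeMonoid.map (emX k m s) u₀) c := by
    rw [hE, av_mul_elem_self, map_neg, hiotar, mul_neg, sub_eq_add_neg]
  have hAne : ∀ i' : Fin p, i' ≠ i → av s (A * E) i' = av s A i' := by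
    intro i' h
    rw [hE]
    exact av_mul_elem_ne A i j (-r) h
  have hBj : bv m (Einv * B) j
      = bv m B j + MonoidAlgebra.single (FreeMonoid.map (emX k m s) u₀) c * bv m B i := by
    rw [hEinv, bv_elem_mul_self, hiotar]
  have hBne : ∀ j' : Fin p, j' ≠ j → bv m (Einv * B) j' = bv m B j' := by
    intro j' h
    rw [hEinv]
    exact bv_elem_mul_ne B i j r h
  -- measure comparison, pointwise
  have hBi : bv m (Einv * B) i = bv m B i := hBne i hij
  have hAj : av s (A * E) j = av s A j := hAne j (Ne.symm hij)
  have htm_i : tm (A * E) (Einv * B) i < tm A B i := by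
    have hpos : tm A B i = 1 + nu (lw (av s A i) * lw (bv m B i)) := by
      rw [tm, if_pos ⟨hfi, hgi⟩]
    by_cases hz : av s (A * E) i ≠ 0 ∧ bv m (Einv * B) i ≠ 0
    · have hval : tm (A * E) (Einv * B) i
          = 1 + nu (lw (av s (A * E) i) * lw (bv m (Einv * B) i)) := by
        rw [tm, if_pos hz]
      rw [hval, hpos, hBi]
      have hlwlt : nu (lw (av s (A * E) i)) < nu (lw (av s A i)) := by
        have := D1 (lw (av s (A * E) i)) (by rw [← hAi]; exact lw_mem hz.1)
        exact this
      have := nu_mul_lt_left hlwlt (lw (bv m B i))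
      omega
    · have hval : tm (A * E) (Einv * B) i = 0 := by
        rw [tm, if_neg hz]
      rw [hval, hpos]
      omega
  have htm_j : tm (A * E) (Einv * B) j ≤ tm A B j := by
    have hpos : tm A B j = 1 + nu (lw (av s A j) * lw (bv m B j)) := by
      rw [tm, if_pos ⟨hfj, hgj⟩]
    by_cases hz : av s (A * E) j ≠ 0 ∧ bv m (Einv * B) j ≠ 0
    · have hval : tm (A * E) (Einv * B) j
          = 1 + nu (lw (av s (A * E) j) * lw (bv m (Einv * B) j)) := by
        rw [tm, if_pos hz]
      rw [hval, hpos, hAj]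
      have hlwle : nu (lw (bv m (Einv * B) j)) ≤ nu (lw (bv m B j)) := by
        have := D2 (lw (bv m (Einv * B) j)) (by rw [← hBj]; exact lw_mem hz.2)
        exact this
      have := nu_mul_le_right hlwle (lw (av s A j))
      omega
    · have hval : tm (A * E) (Einv * B) j = 0 := by
        rw [tm, if_neg hz]
      rw [hval]
      omega
  have htm_other : ∀ x : Fin p, x ≠ i → x ≠ j → tm (A * E) (Einv * B) x = tm A B x := by
    intro x hxi hxj
    rw [tm, tm, hAne x hxi, hBne x hxj]
  rw [meas, meas]
  apply Finset.sum_lt_sum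
  · intro x _
    rcases eq_or_ne x i with rfl | hxi
    · exact le_of_lt htm_i
    rcases eq_or_ne x j with rfl | hxj
    · exact htm_j
    · exact le_of_eq (htm_other x hxi hxj)
  · exact ⟨i, Finset.mem_univ i, htm_i⟩

theorem main_MA (N : ℕ) (A : Matrix (Fin m) (Fin p) (MA F k))
    (B : Matrix (Fin p) (Fin s) (MA F k)) (hN : meas A B = N) (hAB : A * B = 0) :
    ∃ P V : Matrix (Fin p) (Fin p) (MA F k), P * V = 1 ∧ V * P = 1 ∧
      ∀ i, (∀ j, (A * P) j i = 0) ∨ (∀ l, (V * B) i l = 0) := by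
  induction N using Nat.strong_induction_on generalizing A B with
  | _ N IH =>
    by_cases hx : ∃ i0, av s A i0 ≠ 0 ∧ bv m B i0 ≠ 0
    · obtain ⟨i0, h1, h2⟩ := hx
      obtain ⟨E, Einv, hEE, hEE', hlt⟩ := matrix_step A B hAB i0 h1 h2
      have hAB' : (A * E) * (Einv * B) = 0 := by
        rw [Matrix.mul_assoc, ← Matrix.mul_assoc E, hEE, Matrix.one_mul, hAB]
      obtain ⟨P', V', hPV, hVP, hcols⟩ :=
        IH (meas (A * E) (Einv * B)) (hN ▸ hlt) (A * E) (Einv * B) rfl hAB'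
      refine ⟨E * P', V' * Einv, ?_, ?_, ?_⟩
      · rw [Matrix.mul_assoc, ← Matrix.mul_assoc P', hPV, Matrix.one_mul, hEE]
      · rw [Matrix.mul_assoc, ← Matrix.mul_assoc Einv, hEE', Matrix.one_mul, hVP]
      · intro i
        have hA : A * (E * P') = (A * E) * P' := (Matrix.mul_assoc A E P').symm
        have hB : (V' * Einv) * B = V' * (Einv * B) := Matrix.mul_assoc V' Einv B
        rw [hA, hB]
        exact hcols i
    · push_neg at hx
      refine ⟨1, 1, Matrix.one_mul 1, Matrix.one_mul 1, ?_⟩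
      intro i
      by_cases ha : av s A i = 0
      · left
        intro j
        rw [Matrix.mul_one]
        exact av_eq_zero_iff.1 ha j
      · right
        intro l
        rw [Matrix.one_mul]
        exact bv_eq_zero_iff.1 (hx i ha) l

end Step
end MPT

namespace MPT

theorem final {F : Type*} [Field F] {k m p s : ℕ}
    (A : Matrix (Fin m) (Fin p) (FreeAlgebra F (Fin k)))
    (B : Matrix (Fin p) (Fin s) (FreeAlgebra F (Fin k)))
    (hAB : A * B = 0) :
    ∃ P V : Matrix (Fin p) (Fin p) (FreeAlgebra F (Fin k)),
      P * V = 1 ∧ V * P = 1 ∧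
      ∀ i : Fin p, (∀ j, (A * P) j i = 0) ∨ (∀ j, (V * B) i j = 0) := by
  classical
  set r : FreeAlgebra F (Fin k) ≃+* MA F k :=
    (FreeAlgebra.equivMonoidAlgebraFreeMonoid (R := F) (X := Fin k)).toRingEquiv with hre
  set φ : FreeAlgebra F (Fin k) →+* MA F k := r.toRingHom with hφ
  set ψ : MA F k →+* FreeAlgebra F (Fin k) := r.symm.toRingHom with hψ
  have hmapAB : (A.map ⇑φ) * (B.map ⇑φ) = 0 := by
    rw [← Matrix.map_mul, hAB, Matrix.map_zero _ (map_zero φ)]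
  obtain ⟨P', V', hPV, hVP, hfin⟩ :=
    main_MA (meas (A.map ⇑φ) (B.map ⇑φ)) (A.map ⇑φ) (B.map ⇑φ) rfl hmapAB
  have hcomp : (⇑ψ ∘ ⇑φ) = id := funext fun x => r.symm_apply_apply x
  have hA : (A.map ⇑φ).map ⇑ψ = A := by rw [Matrix.map_map, hcomp, Matrix.map_id]
  have hB : (B.map ⇑φ).map ⇑ψ = B := by rw [Matrix.map_map, hcomp, Matrix.map_id]
  refine ⟨P'.map ⇑ψ, V'.map ⇑ψ, ?_, ?_, ?_⟩
  · rw [← Matrix.map_mul, hPV, Matrix.map_one _ (map_zero ψ) (map_one ψ)]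
  · rw [← Matrix.map_mul, hVP, Matrix.map_one _ (map_zero ψ) (map_one ψ)]
  · intro i
    rcases hfin i with h | h
    · left
      intro j
      have hAP : A * P'.map ⇑ψ = ((A.map ⇑φ) * P').map ⇑ψ := by
        rw [Matrix.map_mul, hA]
      rw [hAP, Matrix.map_apply, h j, map_zero]
    · right
      intro j
      have hVB : V'.map ⇑ψ * B = (V' * (B.map ⇑φ)).map ⇑ψ := by
        rw [Matrix.map_mul, hB]
      rw [hVB, Matrix.map_apply, h j, map_zero]

end MPT


/-- Matrix Product Trivialization: if `A · B = 0` over `F⟨X⟩` then there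
is a unit `P` (with two-sided inverse `V`) such that for each index `i` either the `i`-th
column of `A · P` is zero or the `i`-th row of `P⁻¹ · B` is zero. -/
theorem matrix_product_trivialization {F : Type*} [Field F] {k m p s : ℕ}
    (A : Matrix (Fin m) (Fin p) (FreeAlgebra F (Fin k)))
    (B : Matrix (Fin p) (Fin s) (FreeAlgebra F (Fin k)))
    (hAB : A * B = 0) :
    ∃ P V : Matrix (Fin p) (Fin p) (FreeAlgebra F (Fin k)),
      P * V = 1 ∧ V * P = 1 ∧
      ∀ i : Fin p, (∀ j, (A * P) j i = 0) ∨ (∀ j, (V * B) i j = 0) := by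
  exact MPT.final A B hAB
end

section
/- (Degree-bounded trivialization) Let C ∈ F⟨X⟩^{u×d} be a linear matrix and let v ∈ F⟨X⟩^{d×1} be a column vector of polynomials such that C·v = 0. Then there exists an invertible matrix N ∈ F⟨X⟩^{d×d} (a unit of F⟨X⟩^{d×d}) such that: (1) for every i with 1 ≤ i ≤ d, either the i-th column of C·N is all zeros or the i-th entry of N^{−1}·v is zero; and (2) every entry of N is a polynomial of degree at most d². -/
open Matrix BigOperators

namespace DBT
open Matrix

section CoeffDeg
variable {F : Type*} [Field F] {σ : Type*}

noncomputable def coeff (f : FreeAlgebra F σ) (w : FreeMonoid σ) : F :=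
  (FreeAlgebra.equivMonoidAlgebraFreeMonoid f).coeff w

lemma emA_iota (x : σ) : FreeAlgebra.equivMonoidAlgebraFreeMonoid (FreeAlgebra.ι F x)
    = MonoidAlgebra.single (FreeMonoid.of x) 1 := by
  simp [FreeAlgebra.equivMonoidAlgebraFreeMonoid]

lemma emA_alg (a : F) : FreeAlgebra.equivMonoidAlgebraFreeMonoid
    (algebraMap F (FreeAlgebra F σ) a) = MonoidAlgebra.single 1 a := by
  rw [AlgEquiv.commutes]; rfl

lemma coeff_add (f g : FreeAlgebra F σ) (w : FreeMonoid σ) :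
    coeff (f + g) w = coeff f w + coeff g w := by
  unfold coeff; rw [map_add]; rfl

lemma coeff_zero (w : FreeMonoid σ) : coeff (0 : FreeAlgebra F σ) w = 0 := by
  unfold coeff; rw [map_zero]; rfl

lemma coeff_sum {α : Type*} (s : Finset α) (f : α → FreeAlgebra F σ) (w : FreeMonoid σ) :
    coeff (∑ a ∈ s, f a) w = ∑ a ∈ s, coeff (f a) w := by
  classical
  induction s using Finset.induction with
  | empty => simp [coeff_zero]
  | insert _ _ hnot ih =>
    rename_i a s
    rw [Finset.sum_insert hnot, Finset.sum_insert hnot, coeff_add, ih]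

lemma coeff_smul (a : F) (f : FreeAlgebra F σ) (w : FreeMonoid σ) :
    coeff (a • f) w = a * coeff f w := by
  unfold coeff
  rw [_root_.map_smul (FreeAlgebra.equivMonoidAlgebraFreeMonoid (R := F) (X := σ)) a f]; rfl

lemma coeff_alg_mul (a : F) (f : FreeAlgebra F σ) (w : FreeMonoid σ) :
    coeff (algebraMap F _ a * f) w = a * coeff f w := by
  unfold coeff
  rw [_root_.map_mul (FreeAlgebra.equivMonoidAlgebraFreeMonoid (R := F) (X := σ)) _ f, emA_alg]
  exact MonoidAlgebra.single_one_mul_apply _ a w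

lemma coeff_iota_mul_cons (x : σ) (f : FreeAlgebra F σ) (w : FreeMonoid σ) :
    coeff (FreeAlgebra.ι F x * f) (FreeMonoid.of x * w) = coeff f w := by
  unfold coeff
  rw [_root_.map_mul (FreeAlgebra.equivMonoidAlgebraFreeMonoid (R := F) (X := σ)) _ f, emA_iota,
    MonoidAlgebra.coeff_single_mul_eq_mul_coeff (m := FreeMonoid.of x) (m₂ := w), one_mul]
  intro a _
  constructor
  · intro h
    exact (List.cons_injective.eq_iff.mp h)
  · rintro rfl; rfl

lemma coeff_iota_mul_cons_ne {x y : σ} (hxy : x ≠ y) (f : FreeAlgebra F σ) (w : FreeMonoid σ) :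
    coeff (FreeAlgebra.ι F x * f) (FreeMonoid.of y * w) = 0 := by
  unfold coeff
  rw [_root_.map_mul (FreeAlgebra.equivMonoidAlgebraFreeMonoid (R := F) (X := σ)) _ f, emA_iota,
    MonoidAlgebra.single_mul_apply_of_not_exists_mul]
  rintro ⟨d, hd⟩
  have : y :: (w : List σ) = x :: (d : List σ) := hd
  exact hxy (by injection this with h1 h2; exact h1.symm)

lemma length_le_ncDeg {f : FreeAlgebra F σ} {w : FreeMonoid σ} (h : coeff f w ≠ 0) :
    FreeMonoid.length w ≤ ncDeg f :=
  Finset.le_sup (Finsupp.mem_support_iff.mpr h)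

lemma coeff_eq_zero_of_lt {f : FreeAlgebra F σ} {w : FreeMonoid σ} (h : ncDeg f < FreeMonoid.length w) :
    coeff f w = 0 := by
  by_contra hc
  exact absurd (length_le_ncDeg hc) (not_le.mpr h)

lemma exists_coeff_ncDeg {f : FreeAlgebra F σ} (hf : f ≠ 0) :
    ∃ w, FreeMonoid.length w = ncDeg f ∧ coeff f w ≠ 0 := by
  have hne : (FreeAlgebra.equivMonoidAlgebraFreeMonoid (R := F) (X := σ)) f ≠ 0 := by
    intro h
    apply hf
    have := congrArg (FreeAlgebra.equivMonoidAlgebraFreeMonoid (R := F) (X := σ)).symm h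
    simpa using this
  have hs := Finsupp.support_nonempty_iff.mpr (fun h => hne (MonoidAlgebra.coeff_eq_zero.mp h))
  obtain ⟨w, hw, he⟩ := Finset.exists_mem_eq_sup _ hs fun w => FreeMonoid.length w
  exact ⟨w, he.symm, Finsupp.mem_support_iff.mp hw⟩

lemma ncDeg_mul_le (f g : FreeAlgebra F σ) : ncDeg (f * g) ≤ ncDeg f + ncDeg g := by
  classical
  unfold ncDeg
  rw [_root_.map_mul (FreeAlgebra.equivMonoidAlgebraFreeMonoid (R := F) (X := σ)) f g]
  refine Finset.sup_le fun w hw => ?_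
  have := MonoidAlgebra.support_coeff_mul_subset (FreeAlgebra.equivMonoidAlgebraFreeMonoid (R := F) f)
    (FreeAlgebra.equivMonoidAlgebraFreeMonoid g) hw
  rw [Finset.mem_mul] at this
  obtain ⟨a, ha, b, hb, rfl⟩ := this
  rw [FreeMonoid.length_mul]
  exact Nat.add_le_add (Finset.le_sup ha) (Finset.le_sup hb)

lemma ncDeg_add_le (f g : FreeAlgebra F σ) : ncDeg (f + g) ≤ max (ncDeg f) (ncDeg g) := by
  classical
  unfold ncDeg
  rw [map_add]
  refine Finset.sup_le fun w hw => ?_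
  rcases Finset.mem_union.mp (Finsupp.support_add hw) with h | h
  · exact le_max_of_le_left (Finset.le_sup h)
  · exact le_max_of_le_right (Finset.le_sup h)

lemma ncDeg_zero : ncDeg (0 : FreeAlgebra F σ) = 0 := by simp [ncDeg]

lemma ncDeg_alg (a : F) : ncDeg (algebraMap F (FreeAlgebra F σ) a) = 0 := by
  unfold ncDeg
  rw [emA_alg]
  refine le_antisymm (Finset.sup_le fun w hw => ?_) (Nat.zero_le _)
  have := Finsupp.support_single_subset hw
  simp only [Finset.mem_singleton] at this
  subst this
  rfl

lemma ncDeg_one : ncDeg (1 : FreeAlgebra F σ) = 0 := by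
  simpa using ncDeg_alg (F := F) (σ := σ) 1

lemma ncDeg_smul_le (a : F) (f : FreeAlgebra F σ) : ncDeg (a • f) ≤ ncDeg f := by
  unfold ncDeg
  rw [_root_.map_smul (FreeAlgebra.equivMonoidAlgebraFreeMonoid (R := F) (X := σ)) a f]
  exact Finset.sup_le fun w hw => Finset.le_sup (Finsupp.support_smul hw)

lemma ncDeg_iota (x : σ) : ncDeg (FreeAlgebra.ι F x) ≤ 1 := by
  unfold ncDeg
  rw [emA_iota]
  refine Finset.sup_le fun w hw => ?_
  have := Finsupp.support_single_subset hw
  simp only [Finset.mem_singleton] at this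
  subst this
  rfl

lemma ncDeg_sum_le {α : Type*} (s : Finset α) (f : α → FreeAlgebra F σ) (k : ℕ)
    (h : ∀ a ∈ s, ncDeg (f a) ≤ k) : ncDeg (∑ a ∈ s, f a) ≤ k := by
  classical
  induction s using Finset.induction with
  | empty => simp [ncDeg_zero]
  | insert _ _ hnot ih =>
    rename_i a s
    rw [Finset.sum_insert hnot]
    refine le_trans (ncDeg_add_le _ _) (max_le (h a (Finset.mem_insert_self a s)) ?_)
    exact ih fun b hb => h b (Finset.mem_insert_of_mem hb)

lemma ncDeg_neg (f : FreeAlgebra F σ) : ncDeg (-f) = ncDeg f := by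
  unfold ncDeg
  rw [map_neg]
  congr 1
  exact Finsupp.support_neg _

end CoeffDeg

section Ext1
variable {R : Type*} [Semiring R] {d : ℕ}

def ext1 (P : Matrix (Fin d) (Fin d) R) : Matrix (Fin (d+1)) (Fin (d+1)) R :=
  of fun i j => if hi : i = Fin.last d then (if j = Fin.last d then 1 else 0)
    else if hj : j = Fin.last d then 0 else P (i.castPred hi) (j.castPred hj)

@[simp] lemma ext1_cc (P : Matrix (Fin d) (Fin d) R) (i j : Fin d) :
    ext1 P i.castSucc j.castSucc = P i j := by
  simp [ext1, (Fin.castSucc_lt_last i).ne, (Fin.castSucc_lt_last j).ne]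

@[simp] lemma ext1_ll (P : Matrix (Fin d) (Fin d) R) :
    ext1 P (Fin.last d) (Fin.last d) = 1 := by simp [ext1]

@[simp] lemma ext1_lc (P : Matrix (Fin d) (Fin d) R) (j : Fin d) :
    ext1 P (Fin.last d) j.castSucc = 0 := by simp [ext1, (Fin.castSucc_lt_last j).ne]

@[simp] lemma ext1_cl (P : Matrix (Fin d) (Fin d) R) (i : Fin d) :
    ext1 P i.castSucc (Fin.last d) = 0 := by simp [ext1, (Fin.castSucc_lt_last i).ne]

lemma ext1_mul (P Q : Matrix (Fin d) (Fin d) R) : ext1 P * ext1 Q = ext1 (P * Q) := by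
  ext i j
  rw [mul_apply, Fin.sum_univ_castSucc]
  induction i using Fin.lastCases with
  | last =>
    induction j using Fin.lastCases with
    | last => simp
    | cast j => simp
  | cast i =>
    induction j using Fin.lastCases with
    | last => simp
    | cast j => simp [mul_apply]

lemma ext1_one : ext1 (1 : Matrix (Fin d) (Fin d) R) = 1 := by
  ext i j
  induction i using Fin.lastCases with
  | last =>
    induction j using Fin.lastCases with
    | last => simp
    | cast j => simp [Matrix.one_apply, (Fin.castSucc_lt_last j).ne']
  | cast i =>
    induction j using Fin.lastCases with
    | last => simp [Matrix.one_apply, (Fin.castSucc_lt_last i).ne]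
    | cast j => simp [Matrix.one_apply, Fin.castSucc_inj]

lemma mul_ext1_cast {u : ℕ} (X : Matrix (Fin u) (Fin (d+1)) R) (P : Matrix (Fin d) (Fin d) R)
    (k : Fin u) (i : Fin d) :
    (X * ext1 P) k i.castSucc = ∑ j, X k j.castSucc * P j i := by
  rw [mul_apply, Fin.sum_univ_castSucc]
  simp

lemma mul_ext1_last {u : ℕ} (X : Matrix (Fin u) (Fin (d+1)) R) (P : Matrix (Fin d) (Fin d) R)
    (k : Fin u) :
    (X * ext1 P) k (Fin.last d) = X k (Fin.last d) := by
  rw [mul_apply, Fin.sum_univ_castSucc]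
  simp

lemma ext1_mul_col_cast (P : Matrix (Fin d) (Fin d) R) (y : Matrix (Fin (d+1)) (Fin 1) R)
    (i : Fin d) :
    (ext1 P * y) i.castSucc 0 = ∑ j, P i j * y j.castSucc 0 := by
  rw [mul_apply, Fin.sum_univ_castSucc]
  simp

lemma ext1_mul_col_last (P : Matrix (Fin d) (Fin d) R) (y : Matrix (Fin (d+1)) (Fin 1) R) :
    (ext1 P * y) (Fin.last d) 0 = y (Fin.last d) 0 := by
  rw [mul_apply, Fin.sum_univ_castSucc]
  simp

end Ext1

section ConstMat
variable {F : Type*} [Field F] {d : ℕ}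

def permMat (σp : Equiv.Perm (Fin (d+1))) : Matrix (Fin (d+1)) (Fin (d+1)) F :=
  of fun i j => if i = σp j then 1 else 0

lemma permMat_mul_self {σp : Equiv.Perm (Fin (d+1))} (hσ : ∀ x, σp (σp x) = x) :
    (permMat (F := F) σp) * permMat σp = 1 := by
  ext i j
  rw [mul_apply]
  simp only [permMat, of_apply]
  rw [Finset.sum_eq_single (σp j)]
  · rw [hσ, if_pos rfl, mul_one, Matrix.one_apply]
  · intro k _ hk
    rw [if_neg hk, mul_zero]
  · intro h
    exact absurd (Finset.mem_univ _) h

lemma permMat_mul {σp : Equiv.Perm (Fin (d+1))} (hσ : ∀ x, σp (σp x) = x)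
    (X : Matrix (Fin (d+1)) (Fin (d+1)) F) (i j : Fin (d+1)) :
    (permMat (F := F) σp * X) i j = X (σp i) j := by
  rw [mul_apply]
  simp only [permMat, of_apply]
  rw [Finset.sum_eq_single (σp i)]
  · rw [hσ, if_pos rfl, one_mul]
  · intro k _ hk
    rw [if_neg (fun h => hk (by rw [h, hσ])), zero_mul]
  · intro h
    exact absurd (Finset.mem_univ _) h

def colMat (c : Fin (d+1) → F) : Matrix (Fin (d+1)) (Fin (d+1)) F :=
  of fun i j => if j = Fin.last d then c i else if i = j then 1 else 0

def colMatInv (c : Fin (d+1) → F) : Matrix (Fin (d+1)) (Fin (d+1)) F :=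
  of fun i j => if j = Fin.last d then
      (if i = Fin.last d then (c (Fin.last d))⁻¹ else -(c i) * (c (Fin.last d))⁻¹)
    else if i = j then 1 else 0

lemma castSucc_ne_last (k : Fin d) : k.castSucc ≠ Fin.last d := (Fin.castSucc_lt_last k).ne

lemma last_ne_castSucc (k : Fin d) : Fin.last d ≠ k.castSucc := (castSucc_ne_last k).symm

lemma colMat_mul_inv {c : Fin (d+1) → F} (hc : c (Fin.last d) ≠ 0) :
    colMat c * colMatInv c = 1 := by
  ext i j
  rw [mul_apply]
  simp only [colMat, colMatInv, of_apply]
  by_cases hj : j = Fin.last d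
  · subst hj
    rw [Fin.sum_univ_castSucc]
    by_cases hi : i = Fin.last d
    · subst hi
      simp [castSucc_ne_last, last_ne_castSucc, mul_inv_cancel₀ hc]
    · rw [Matrix.one_apply_ne hi, Finset.sum_eq_single (i.castPred hi)]
      · simp only [castSucc_ne_last, if_false, if_pos rfl, Fin.castSucc_castPred, if_neg hi]
        simp only [↓reduceIte]
        field_simp
        ring
      · intro k _ hk
        simp only [castSucc_ne_last, if_false, if_pos rfl]
        rw [if_neg, zero_mul]
        intro h
        exact hk (by rw [← Fin.castPred_castSucc (i := k)]; congr 1; exact h.symm)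
      · intro h; exact absurd (Finset.mem_univ _) h
  · rw [Finset.sum_eq_single j]
    · simp [hj, Matrix.one_apply]
    · intro k _ hk
      rw [if_neg hj, if_neg hk, mul_zero]
    · intro h; exact absurd (Finset.mem_univ _) h

lemma colMatInv_mul {c : Fin (d+1) → F} (hc : c (Fin.last d) ≠ 0) :
    colMatInv c * colMat c = 1 := by
  ext i j
  rw [mul_apply]
  simp only [colMat, colMatInv, of_apply]
  by_cases hj : j = Fin.last d
  · subst hj
    rw [Fin.sum_univ_castSucc]
    by_cases hi : i = Fin.last d
    · subst hi
      simp [castSucc_ne_last, last_ne_castSucc, inv_mul_cancel₀ hc]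
    · rw [Matrix.one_apply_ne hi, Finset.sum_eq_single (i.castPred hi)]
      · simp only [castSucc_ne_last, if_false, if_pos rfl, Fin.castSucc_castPred, if_neg hi]
        simp only [↓reduceIte]
        field_simp
        ring
      · intro k _ hk
        simp only [castSucc_ne_last, if_false, if_pos rfl]
        rw [if_neg, zero_mul]
        intro h
        exact hk (by rw [← Fin.castPred_castSucc (i := k)]; congr 1; exact h.symm)
      · intro h; exact absurd (Finset.mem_univ _) h
  · rw [Finset.sum_eq_single j]
    · simp [hj, Matrix.one_apply]
    · intro k _ hk
      rw [if_neg hj, if_neg hk, mul_zero]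
    · intro h; exact absurd (Finset.mem_univ _) h

end ConstMat

section LinMat
variable {F : Type*} [Field F] {n : ℕ}

lemma mul_alg {σ : Type*} (f : FreeAlgebra F σ) (c : F) :
    f * algebraMap F _ c = c • f := by
  rw [Algebra.smul_def, ← Algebra.commutes]

lemma alg_mul {σ : Type*} (f : FreeAlgebra F σ) (c : F) :
    algebraMap F _ c * f = c • f := (Algebra.smul_def c f).symm

lemma linMatrix_entry {α β : Type*} (A0 : Matrix α β F) (A : Fin n → Matrix α β F) (k : α) (j : β) :
    linMatrix A0 A k j = algebraMap F _ (A0 k j) + ∑ i, A i k j • FreeAlgebra.ι F i := rfl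

lemma linMatrix_mul_map {p q r : ℕ} (A0 : Matrix (Fin p) (Fin q) F)
    (A : Fin n → Matrix (Fin p) (Fin q) F) (K : Matrix (Fin q) (Fin r) F) :
    linMatrix A0 A * K.map (algebraMap F (FreeAlgebra F (Fin n)))
      = linMatrix (A0 * K) (fun i => A i * K) := by
  ext k j
  rw [mul_apply]
  simp only [linMatrix_entry, map_apply]
  have : ∀ l, (algebraMap F (FreeAlgebra F (Fin n)) (A0 k l) + ∑ i, A i k l • FreeAlgebra.ι F i)
      * algebraMap F _ (K l j)
      = algebraMap F (FreeAlgebra F (Fin n)) (A0 k l * K l j)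
        + ∑ i, (A i k l * K l j) • FreeAlgebra.ι F i := by
    intro l
    rw [add_mul, ← RingHom.map_mul, Finset.sum_mul]
    congr 1
    refine Finset.sum_congr rfl fun i _ => ?_
    rw [smul_mul_assoc, mul_alg, smul_smul, mul_comm]
  rw [Finset.sum_congr rfl fun l _ => this l, Finset.sum_add_distrib, ← map_sum,
    Finset.sum_comm]
  congr 1
  refine Finset.sum_congr rfl fun i _ => ?_
  rw [← Finset.sum_smul, Matrix.mul_apply]

lemma coeff_row_cons {q : ℕ} (A0 : Fin q → F) (A : Fin n → Fin q → F)
    (v : Fin q → FreeAlgebra F (Fin n)) (x : Fin n) (w : FreeMonoid (Fin n)) :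
    coeff (∑ j, (algebraMap F (FreeAlgebra F (Fin n)) (A0 j) + ∑ i, A i j • FreeAlgebra.ι F i) * v j)
        (FreeMonoid.of x * w)
      = (∑ j, A0 j * coeff (v j) (FreeMonoid.of x * w)) + ∑ j, A x j * coeff (v j) w := by
  rw [coeff_sum, ← Finset.sum_add_distrib]
  refine Finset.sum_congr rfl fun j _ => ?_
  rw [add_mul, coeff_add, coeff_alg_mul, Finset.sum_mul, coeff_sum]
  congr 1
  rw [Finset.sum_congr rfl (fun i _ => by rw [smul_mul_assoc, coeff_smul]),
    Finset.sum_eq_single x]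
  · rw [coeff_iota_mul_cons]
  · intro i _ hi
    rw [coeff_iota_mul_cons_ne hi, mul_zero]
  · intro h; exact absurd (Finset.mem_univ _) h

lemma ncDeg_linMatrix {α β : Type*} (A0 : Matrix α β F) (A : Fin n → Matrix α β F) (k : α) (j : β) :
    ncDeg (linMatrix A0 A k j) ≤ 1 := by
  rw [linMatrix_entry]
  refine le_trans (ncDeg_add_le _ _) (max_le ?_ ?_)
  · rw [ncDeg_alg]; exact Nat.zero_le _
  · exact ncDeg_sum_le _ _ _ fun i _ => le_trans (ncDeg_smul_le _ _) (ncDeg_iota i)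

lemma ncDeg_matmul {p q r : ℕ} (X : Matrix (Fin p) (Fin q) (FreeAlgebra F (Fin n)))
    (Y : Matrix (Fin q) (Fin r) (FreeAlgebra F (Fin n))) {kx ky : ℕ}
    (hx : ∀ i j, ncDeg (X i j) ≤ kx) (hy : ∀ i j, ncDeg (Y i j) ≤ ky) :
    ∀ i j, ncDeg ((X * Y) i j) ≤ kx + ky := by
  intro i j
  rw [mul_apply]
  exact ncDeg_sum_le _ _ _ fun l _ =>
    le_trans (ncDeg_mul_le _ _) (Nat.add_le_add (hx i l) (hy l j))

lemma ncDeg_ext1 {d : ℕ} (P : Matrix (Fin d) (Fin d) (FreeAlgebra F (Fin n))) {k : ℕ}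
    (h : ∀ i j, ncDeg (P i j) ≤ k) : ∀ i j, ncDeg (ext1 P i j) ≤ k := by
  intro i j
  induction i using Fin.lastCases with
  | last =>
    induction j using Fin.lastCases with
    | last => rw [ext1_ll, ncDeg_one]; exact Nat.zero_le _
    | cast j => rw [ext1_lc, ncDeg_zero]; exact Nat.zero_le _
  | cast i =>
    induction j using Fin.lastCases with
    | last => rw [ext1_cl, ncDeg_zero]; exact Nat.zero_le _
    | cast j => rw [ext1_cc]; exact h i j

lemma ncDeg_one_entry {d : ℕ} (i j : Fin d) :
    ncDeg ((1 : Matrix (Fin d) (Fin d) (FreeAlgebra F (Fin n))) i j) = 0 := by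
  by_cases h : i = j
  · subst h; rw [Matrix.one_apply_eq, ncDeg_one]
  · rw [Matrix.one_apply_ne h, ncDeg_zero]

lemma linMatrix_comb {α β : Type*} [Fintype β] (A0 : Matrix α β F) (A : Fin n → Matrix α β F)
    (γ : F) (k b : α) (j : β) :
    linMatrix A0 A k j + algebraMap F (FreeAlgebra F (Fin n)) γ * linMatrix A0 A b j
      = algebraMap F (FreeAlgebra F (Fin n)) (A0 k j + γ * A0 b j)
        + ∑ i, (A i k j + γ * A i b j) • FreeAlgebra.ι F i := by
  rw [linMatrix_entry, linMatrix_entry, mul_add, Finset.mul_sum, ← RingHom.map_mul,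
    RingHom.map_add, RingHom.map_mul]
  have h1 : (∑ i, algebraMap F (FreeAlgebra F (Fin n)) γ * (A i b j • FreeAlgebra.ι F i))
      = ∑ i, (γ * A i b j) • FreeAlgebra.ι F i :=
    Finset.sum_congr rfl fun i _ => by rw [alg_mul, smul_smul]
  have h2 : (∑ i, (A i k j + γ * A i b j) • FreeAlgebra.ι F i)
      = ∑ i, (A i k j • FreeAlgebra.ι F i + (γ * A i b j) • FreeAlgebra.ι F i) :=
    Finset.sum_congr rfl fun i _ => add_smul _ _ _
  rw [h1, h2, Finset.sum_add_distrib]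
  abel

end LinMat
end DBT

namespace DBT
open Matrix

theorem aux {F : Type*} [Field F] {n : ℕ} :
    ∀ d : ℕ, ∀ {u : ℕ} (C : Matrix (Fin u) (Fin d) (FreeAlgebra F (Fin n))),
      IsLinearMat C → ∀ v : Matrix (Fin d) (Fin 1) (FreeAlgebra F (Fin n)), C * v = 0 →
      ∃ N M : Matrix (Fin d) (Fin d) (FreeAlgebra F (Fin n)),
        N * M = 1 ∧ M * N = 1 ∧
        (∀ i : Fin d, (∀ j, (C * N) j i = 0) ∨ (M * v) i 0 = 0) ∧
        (∀ i j, ncDeg (N i j) ≤ d) := by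
  intro d
  induction d with
  | zero =>
    intro u C _ v _
    exact ⟨1, 1, one_mul 1, one_mul 1, fun i => i.elim0, fun i => i.elim0⟩
  | succ d IH =>
    intro u C hC v hCv
    by_cases hv0 : ∀ j, v j 0 = 0
    · refine ⟨1, 1, one_mul 1, one_mul 1, fun i => Or.inr ?_, fun i j => ?_⟩
      · rw [Matrix.one_mul]; exact hv0 i
      · rw [ncDeg_one_entry]; exact Nat.zero_le _
    obtain ⟨A0, A, rfl⟩ := hC
    obtain ⟨j₁, hj₁⟩ := not_forall.mp hv0
    have hwex : ∃ w : FreeMonoid (Fin n),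
        FreeMonoid.length w = (Finset.univ.sup fun j : Fin (d+1) => ncDeg (v j 0))
        ∧ ∃ j, coeff (v j 0) w ≠ 0 := by
      obtain ⟨j₂, -, hj₂⟩ := Finset.exists_mem_eq_sup (Finset.univ : Finset (Fin (d+1)))
        ⟨j₁, Finset.mem_univ j₁⟩ (fun j => ncDeg (v j 0))
      by_cases h2 : v j₂ 0 = 0
      · obtain ⟨w, hwl, hwc⟩ := exists_coeff_ncDeg hj₁
        have h3 : ncDeg (v j₁ 0) ≤ Finset.univ.sup fun j : Fin (d+1) => ncDeg (v j 0) :=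
          Finset.le_sup (f := fun j : Fin (d+1) => ncDeg (v j 0)) (Finset.mem_univ j₁)
        have h4 : (Finset.univ.sup fun j : Fin (d+1) => ncDeg (v j 0)) = 0 := by
          rw [hj₂, h2, ncDeg_zero]
        exact ⟨w, by omega, j₁, hwc⟩
      · obtain ⟨w, hwl, hwc⟩ := exists_coeff_ncDeg h2
        exact ⟨w, by rw [hwl, ← hj₂], j₂, hwc⟩
    obtain ⟨w, hwm, jw, hjw⟩ := hwex
    set t : Fin (d+1) → F := fun j => coeff (v j 0) w with htdef
    have fact1 : ∀ (x : Fin n) (k : Fin u), ∑ j, A x k j * t j = 0 := by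
      intro x k
      have h0 : coeff ((linMatrix A0 A * v) k 0) (FreeMonoid.of x * w) = 0 := by
        rw [hCv]
        exact coeff_zero _
      rw [mul_apply] at h0
      simp only [linMatrix_entry] at h0
      rw [coeff_row_cons (fun j => A0 k j) (fun i j => A i k j) (fun j => v j 0) x w] at h0
      have hz : ∀ j : Fin (d+1), coeff (v j 0) (FreeMonoid.of x * w) = 0 := by
        intro j
        refine coeff_eq_zero_of_lt ?_
        rw [FreeMonoid.length_mul, FreeMonoid.length_of, hwm]
        have hle2 : ncDeg (v j 0) ≤ Finset.univ.sup fun j : Fin (d+1) => ncDeg (v j 0) :=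
          Finset.le_sup (f := fun j : Fin (d+1) => ncDeg (v j 0)) (Finset.mem_univ j)
        omega
      rw [Finset.sum_congr rfl (fun j _ => by rw [hz j, mul_zero]), Finset.sum_const_zero,
        zero_add] at h0
      exact h0
    obtain ⟨a, hta⟩ : ∃ a, t a ≠ 0 := ⟨jw, hjw⟩
    set σp := Equiv.swap a (Fin.last d) with hσp
    have hσ : ∀ x, σp (σp x) = x := fun x => Equiv.swap_apply_self a (Fin.last d) x
    set c : Fin (d+1) → F := fun i => t (σp i) with hcdef
    have hclast : c (Fin.last d) ≠ 0 := by
      rw [hcdef]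
      simp only [hσp, Equiv.swap_apply_right]
      exact hta
    set K : Matrix (Fin (d+1)) (Fin (d+1)) F := permMat σp * colMat c with hKdef
    set Kinv : Matrix (Fin (d+1)) (Fin (d+1)) F := colMatInv c * permMat σp with hKinvdef
    have hK1 : K * Kinv = 1 := by
      rw [hKdef, hKinvdef, mul_assoc, ← mul_assoc (colMat c), colMat_mul_inv hclast, one_mul,
        permMat_mul_self hσ]
    have hK2 : Kinv * K = 1 := by
      rw [hKdef, hKinvdef, mul_assoc, ← mul_assoc (permMat σp) (permMat σp),
        permMat_mul_self hσ, one_mul, colMatInv_mul hclast]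
    have hKlast : ∀ i, K i (Fin.last d) = t i := by
      intro i
      rw [hKdef, permMat_mul hσ]
      show colMat c (σp i) (Fin.last d) = t i
      simp [colMat, hcdef, hσ]
    set Kf := K.map (algebraMap F (FreeAlgebra F (Fin n))) with hKfdef
    set Kfinv := Kinv.map (algebraMap F (FreeAlgebra F (Fin n))) with hKfinvdef
    have hKf1 : Kf * Kfinv = 1 := by
      rw [hKfdef, hKfinvdef, ← Matrix.map_mul, hK1, Matrix.map_one _ (map_zero _) (map_one _)]
    have hKf2 : Kfinv * Kf = 1 := by
      rw [hKfdef, hKfinvdef, ← Matrix.map_mul, hK2, Matrix.map_one _ (map_zero _) (map_one _)]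
    set C' := linMatrix (A0 * K) (fun i => A i * K) with hC'def
    have hCKf : linMatrix A0 A * Kf = C' := linMatrix_mul_map A0 A K
    set v' := Kfinv * v with hv'def
    have hC'v' : C' * v' = 0 := by
      rw [← hCKf, hv'def]
      calc linMatrix A0 A * Kf * (Kfinv * v) = linMatrix A0 A * ((Kf * Kfinv) * v) := by
            rw [Matrix.mul_assoc, Matrix.mul_assoc]
        _ = 0 := by rw [hKf1, Matrix.one_mul, hCv]
    set s : Fin u → F := fun k => (A0 * K) k (Fin.last d) with hsdef
    have colLast : ∀ k, C' k (Fin.last d) = algebraMap F (FreeAlgebra F (Fin n)) (s k) := by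
      intro k
      rw [hC'def, linMatrix_entry]
      have hAK : ∀ i, (A i * K) k (Fin.last d) = 0 := by
        intro i
        rw [Matrix.mul_apply, Finset.sum_congr rfl fun j _ => by rw [hKlast j]]
        exact fact1 i k
      rw [Finset.sum_congr rfl fun i _ => by rw [hAK i, zero_smul], Finset.sum_const_zero,
        add_zero]
    -- the common assembly step
    have key : ∀ N2 M2 : Matrix (Fin (d+1)) (Fin (d+1)) (FreeAlgebra F (Fin n)),
        N2 * M2 = 1 → M2 * N2 = 1 → (∀ i j, ncDeg (N2 i j) ≤ 1) →
        IsLinearMat (of fun (k : Fin u) (j : Fin d) => (C' * N2) k j.castSucc) →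
        ((∀ k, (C' * N2) k (Fin.last d) = 0) ∨ ((M2 * v') (Fin.last d) 0 = 0)) →
        ∃ N M : Matrix (Fin (d+1)) (Fin (d+1)) (FreeAlgebra F (Fin n)),
          N * M = 1 ∧ M * N = 1 ∧
          (∀ i : Fin (d+1), (∀ j, (linMatrix A0 A * N) j i = 0) ∨ (M * v) i 0 = 0) ∧
          (∀ i j, ncDeg (N i j) ≤ d + 1) := by
      intro N2 M2 h21 h22 hdeg2 hlin hlast
      set C'' := C' * N2 with hC''def
      set v'' := M2 * v' with hv''def
      have hC''v'' : C'' * v'' = 0 := by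
        rw [hC''def, hv''def]
        calc C' * N2 * (M2 * v') = C' * ((N2 * M2) * v') := by
              rw [Matrix.mul_assoc, Matrix.mul_assoc]
          _ = 0 := by rw [h21, Matrix.one_mul, hC'v']
      set Chat : Matrix (Fin u) (Fin d) (FreeAlgebra F (Fin n)) :=
        of (fun (k : Fin u) (j : Fin d) => C'' k j.castSucc) with hChatdef
      set vhat : Matrix (Fin d) (Fin 1) (FreeAlgebra F (Fin n)) :=
        of (fun (j : Fin d) (_ : Fin 1) => v'' j.castSucc 0) with hvhatdef
      have hChatvhat : Chat * vhat = 0 := by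
        ext k z
        have hz0 : z = 0 := Subsingleton.elim z 0
        subst hz0
        rw [Matrix.zero_apply, mul_apply]
        have hfull : (∑ j : Fin (d+1), C'' k j * v'' j 0) = 0 := by
          have hh := congrFun (congrFun hC''v'' k) 0
          rw [Matrix.zero_apply] at hh
          rw [← hh, mul_apply]
        rw [Fin.sum_univ_castSucc] at hfull
        have hcross : C'' k (Fin.last d) * v'' (Fin.last d) 0 = 0 := by
          rcases hlast with h | h
          · rw [h k, zero_mul]
          · rw [h, mul_zero]
        rw [hcross, add_zero] at hfull
        exact hfull
      obtain ⟨Nh, Mh, hh1, hh2, hhcond, hhdeg⟩ := IH Chat hlin vhat hChatvhat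
      have hCN : linMatrix A0 A * (Kf * (N2 * ext1 Nh)) = C'' * ext1 Nh := by
        rw [← Matrix.mul_assoc, hCKf, ← Matrix.mul_assoc, ← hC''def]
      have hMv : (ext1 Mh * M2) * Kfinv * v = ext1 Mh * v'' := by
        rw [Matrix.mul_assoc, Matrix.mul_assoc, ← hv'def, ← hv''def]
      refine ⟨Kf * (N2 * ext1 Nh), (ext1 Mh * M2) * Kfinv, ?_, ?_, ?_, ?_⟩
      · simp only [mul_assoc]
        rw [← mul_assoc (ext1 Nh) (ext1 Mh), ext1_mul, hh1, ext1_one, one_mul,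
          ← mul_assoc N2 M2, h21, one_mul, hKf1]
      · simp only [mul_assoc]
        rw [← mul_assoc Kfinv Kf, hKf2, one_mul, ← mul_assoc M2 N2, h22, one_mul,
          ext1_mul, hh2, ext1_one]
      · intro i
        induction i using Fin.lastCases with
        | last =>
          rcases hlast with h | h
          · left
            intro k
            rw [hCN, mul_ext1_last]
            exact h k
          · right
            rw [hMv, ext1_mul_col_last]
            exact h
        | cast i' =>
          rcases hhcond i' with h | h
          · left
            intro k
            rw [hCN, mul_ext1_cast]
            have he : (Chat * Nh) k i' = ∑ j, C'' k j.castSucc * Nh j i' := by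
              rw [mul_apply]; rfl
            rw [← he]
            exact h k
          · right
            rw [hMv, ext1_mul_col_cast]
            have he : (Mh * vhat) i' 0 = ∑ j, Mh i' j * v'' j.castSucc 0 := by
              rw [mul_apply]; rfl
            rw [← he]
            exact h
      · intro i j
        have h1 : ∀ i j, ncDeg (Kf i j) ≤ 0 := by
          intro i j
          rw [hKfdef, Matrix.map_apply, ncDeg_alg]
        have h2 : ∀ i j, ncDeg ((N2 * ext1 Nh) i j) ≤ 1 + d :=
          ncDeg_matmul _ _ hdeg2 (ncDeg_ext1 Nh hhdeg)
        have h3 := ncDeg_matmul Kf (N2 * ext1 Nh) h1 h2 i j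
        omega
    by_cases hsA : ∀ k, s k = 0
    · refine key 1 1 (one_mul 1) (one_mul 1)
        (fun i j => by rw [ncDeg_one_entry]; exact Nat.zero_le _) ?_ ?_
      · refine ⟨of (fun k j => (A0 * K) k j.castSucc),
          fun i => of (fun k j => (A i * K) k j.castSucc), ?_⟩
        ext k j
        show (C' * (1 : Matrix (Fin (d+1)) (Fin (d+1)) (FreeAlgebra F (Fin n)))) k j.castSucc = _
        rw [Matrix.mul_one, hC'def]
        rfl
      · left
        intro k
        show (C' * (1 : Matrix (Fin (d+1)) (Fin (d+1)) (FreeAlgebra F (Fin n)))) k (Fin.last d) = 0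
        rw [Matrix.mul_one, colLast, hsA k, map_zero]
    · obtain ⟨b, hb⟩ := not_forall.mp hsA
      set Z : Matrix (Fin (d+1)) (Fin (d+1)) (FreeAlgebra F (Fin n)) :=
        of (fun i j => if i = Fin.last d ∧ ¬(j = Fin.last d) then
          -(algebraMap F (FreeAlgebra F (Fin n)) (s b)⁻¹) * C' b j else 0) with hZdef
      have hZapp : ∀ i j, Z i j = if i = Fin.last d ∧ ¬(j = Fin.last d) then
          -(algebraMap F (FreeAlgebra F (Fin n)) (s b)⁻¹) * C' b j else 0 := fun i j => rfl
      have hZZ : Z * Z = 0 := by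
        ext i j
        rw [Matrix.zero_apply, mul_apply]
        refine Finset.sum_eq_zero fun k _ => ?_
        by_cases hk : k = Fin.last d
        · rw [hZapp i k, if_neg (fun hcon => hcon.2 hk), zero_mul]
        · rw [hZapp k j, if_neg (fun hcon => hk hcon.1), mul_zero]
      have hprod1 : (1 + Z) * (1 - Z) = 1 := by
        rw [add_mul, one_mul, mul_sub, mul_one, hZZ, sub_zero, sub_add_cancel]
      have hprod2 : (1 - Z) * (1 + Z) = 1 := by
        rw [sub_mul, one_mul, mul_add, mul_one, hZZ, add_zero, add_sub_cancel_right]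
      have hdegZ : ∀ i j, ncDeg ((1 + Z) i j) ≤ 1 := by
        intro i j
        rw [Matrix.add_apply]
        refine le_trans (ncDeg_add_le _ _) (max_le ?_ ?_)
        · rw [ncDeg_one_entry]; exact Nat.zero_le _
        · rw [hZapp i j]
          by_cases hcon : i = Fin.last d ∧ ¬(j = Fin.last d)
          · rw [if_pos hcon, neg_mul, ncDeg_neg]
            refine le_trans (ncDeg_mul_le _ _) ?_
            rw [ncDeg_alg, hC'def]
            simpa using ncDeg_linMatrix (A0 * K) (fun i => A i * K) b j
          · rw [if_neg hcon, ncDeg_zero]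
            exact Nat.zero_le _
      have hC'Z : ∀ (k : Fin u) (j : Fin d), (C' * ((1 : Matrix (Fin (d+1)) (Fin (d+1)) (FreeAlgebra F (Fin n))) + Z)) k j.castSucc
          = C' k j.castSucc + algebraMap F (FreeAlgebra F (Fin n)) (s k) *
            (-(algebraMap F (FreeAlgebra F (Fin n)) (s b)⁻¹) * C' b j.castSucc) := by
        intro k j
        rw [Matrix.mul_add, Matrix.mul_one, Matrix.add_apply]
        congr 1
        rw [mul_apply, Finset.sum_eq_single (Fin.last d)]
        · rw [colLast, hZapp, if_pos ⟨rfl, castSucc_ne_last j⟩]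
        · intro l _ hl
          rw [hZapp, if_neg (fun hcon => hl hcon.1), mul_zero]
        · intro h; exact absurd (Finset.mem_univ _) h
      refine key (1 + Z) (1 - Z) hprod1 hprod2 hdegZ ?_ ?_
      · -- linearity of the reduced matrix
        refine ⟨of (fun k j => (A0 * K) k j.castSucc
            + (-(s k * (s b)⁻¹)) * (A0 * K) b j.castSucc),
          fun i => of (fun k j => (A i * K) k j.castSucc
            + (-(s k * (s b)⁻¹)) * (A i * K) b j.castSucc), ?_⟩
        ext k j
        show (C' * ((1 : Matrix (Fin (d+1)) (Fin (d+1)) (FreeAlgebra F (Fin n))) + Z)) k j.castSucc = _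
        rw [hC'Z k j]
        have hscal : ∀ X : FreeAlgebra F (Fin n),
            algebraMap F (FreeAlgebra F (Fin n)) (s k) *
              (-(algebraMap F (FreeAlgebra F (Fin n)) (s b)⁻¹) * X)
            = algebraMap F (FreeAlgebra F (Fin n)) (-(s k * (s b)⁻¹)) * X := by
          intro X
          rw [neg_mul, mul_neg, ← mul_assoc, ← RingHom.map_mul, map_neg, neg_mul]
        rw [hscal, hC'def, linMatrix_comb]
        rfl
      · -- last entry of (1 - Z) * v' vanishes
        right
        rw [Matrix.sub_mul, Matrix.one_mul, Matrix.sub_apply]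
        have hrow : ∑ l, C' b l * v' l 0 = 0 := by
          have hh := congrFun (congrFun hC'v' b) 0
          rw [Matrix.zero_apply] at hh
          rw [← hh, mul_apply]
        have hZv : (Z * v') (Fin.last d) 0 = v' (Fin.last d) 0 := by
          rw [mul_apply, Fin.sum_univ_castSucc]
          have hZll : Z (Fin.last d) (Fin.last d) = 0 := by
            rw [hZapp, if_neg (fun hcon => hcon.2 rfl)]
          rw [hZll, zero_mul, add_zero]
          have hterm : ∀ l : Fin d, Z (Fin.last d) l.castSucc * v' l.castSucc 0
              = -(algebraMap F (FreeAlgebra F (Fin n)) (s b)⁻¹)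
                  * (C' b l.castSucc * v' l.castSucc 0) := by
            intro l
            rw [hZapp, if_pos ⟨rfl, castSucc_ne_last l⟩, mul_assoc]
          rw [Finset.sum_congr rfl fun l _ => hterm l, ← Finset.mul_sum]
          have hsum : ∑ l : Fin d, C' b l.castSucc * v' l.castSucc 0
              = -(algebraMap F (FreeAlgebra F (Fin n)) (s b) * v' (Fin.last d) 0) := by
            have hh := hrow
            rw [Fin.sum_univ_castSucc, colLast] at hh
            exact eq_neg_of_add_eq_zero_left hh
          rw [hsum, neg_mul, mul_neg, neg_neg, ← mul_assoc, ← RingHom.map_mul,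
            inv_mul_cancel₀ hb, RingHom.map_one, one_mul]
        rw [hZv, sub_self]

end DBT


/-- Degree-bounded trivialization: if `C` is a linear matrix and `v` a
column of polynomials with `C · v = 0`, there is a unit `N` (with inverse `M`) such that
for each `i` either the `i`-th column of `C · N` is zero or the `i`-th entry of `N⁻¹ · v`
is zero, and every entry of `N` has degree at most `d²`. -/
theorem degree_bounded_trivialization {F : Type*} [Field F] {n u d : ℕ}
    (C : Matrix (Fin u) (Fin d) (FreeAlgebra F (Fin n))) (hC : IsLinearMat C)
    (v : Matrix (Fin d) (Fin 1) (FreeAlgebra F (Fin n)))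
    (hCv : C * v = 0) :
    ∃ N M : Matrix (Fin d) (Fin d) (FreeAlgebra F (Fin n)),
      N * M = 1 ∧ M * N = 1 ∧
      (∀ i : Fin d, (∀ j, (C * N) j i = 0) ∨ (M * v) i 0 = 0) ∧
      (∀ i j, ncDeg (N i j) ≤ d ^ 2) := by
  obtain ⟨N, M, h1, h2, h3, h4⟩ := DBT.aux d C hC v hCv
  exact ⟨N, M, h1, h2, h3, fun i j =>
    le_trans (h4 i j) (Nat.le_self_pow (by norm_num) d)⟩
end

section
/- Let L = A_0 + A_1x_1 + ⋯ + A_nx_n ∈ F⟨X⟩^{d×d} be a right monic linear matrix, let ℓ ≥ 1, let M_1,…,M_n ∈ F^{ℓ×ℓ} be scalar matrices, and let L' = A_0 ⊗ I_ℓ + Σ_{i=1}^n A_i ⊗ (Y_i + M_i) ∈ F⟨Y⟩^{dℓ×dℓ} be the dilated linear matrix, where Y_i is the ℓ×ℓ matrix whose (j,k)-th entry is the noncommuting variable y_{i,j,k}. Then L' is a right monic linear matrix in the variables y_{i,j,k}; moreover, if its constant term A_0 ⊗ I_ℓ + Σ_{i=1}^n A_i ⊗ M_i is an invertible scalar matrix,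 then L' is full. -/
open Matrix BigOperators

/-- Auxiliary: a matrix of full row rank over a field has a right inverse. -/
lemma exists_right_inv_of_rank {F : Type*} [Field F] {m p : Type*} [Fintype m] [Fintype p]
    [DecidableEq m] [DecidableEq p]
    {B : Matrix m p F} (hB : B.rank = Fintype.card m) : ∃ C : Matrix p m F, B * C = 1 := by
  have hr : LinearMap.range B.mulVecLin = ⊤ := by
    apply Submodule.eq_top_of_finrank_eq
    rw [show Module.finrank F (LinearMap.range B.mulVecLin) = B.rank from rfl, hB,
      Module.finrank_pi]
  obtain ⟨g, hg⟩ := B.mulVecLin.exists_rightInverse_of_surjective hr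
  refine ⟨LinearMap.toMatrix' g, ?_⟩
  apply Matrix.toLin'.injective
  rw [Matrix.toLin'_mul, Matrix.toLin'_one, Matrix.toLin'_toMatrix']
  have hBt : Matrix.toLin' B = B.mulVecLin := rfl
  rw [hBt, hg]

/-- Auxiliary: a matrix with a right inverse has full row rank. -/
lemma rank_eq_of_right_inv {F : Type*} [Field F] {m p : Type*} [Fintype m] [Fintype p]
    [DecidableEq m] {B : Matrix m p F} {C : Matrix p m F} (h : B * C = 1) :
    B.rank = Fintype.card m := by
  refine le_antisymm (B.rank_le_card_height) ?_
  calc Fintype.card m = (1 : Matrix m m F).rank := (Matrix.rank_one).symm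
    _ = (B * C).rank := by rw [h]
    _ ≤ B.rank := Matrix.rank_mul_le_left _ _

/-- the dilated linear matrix `L' = A0 ⊗ I_ℓ + ∑ A_i ⊗ (Y_i + M_i)` of a
right monic linear matrix is right monic in the variables `y_{i,j,k}`; and if its
constant term `A0 ⊗ I_ℓ + ∑ A_i ⊗ M_i` is invertible then `L'` is full. -/
theorem dilated_right_monic_and_full {F : Type*} [Field F] {n d ℓ : ℕ} (hl : 0 < ℓ)
    (A0 : Matrix (Fin d) (Fin d) F) (A : Fin n → Matrix (Fin d) (Fin d) F)
    (hmonic : RightMonicCoeffs A)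
    (M : Fin n → Matrix (Fin ℓ) (Fin ℓ) F) :
    IsRightMonicLinear (dilate A0 A ℓ M) ∧
    (IsUnit (Matrix.of fun p q : Fin d × Fin ℓ =>
        A0 p.1 q.1 * (if p.2 = q.2 then (1 : F) else 0) +
          ∑ i, A i p.1 q.1 * M i p.2 q.2) →
      IsFullMat (dilate A0 A ℓ M)) := by
  classical
  constructor
  · -- right monic linear
    refine ⟨Matrix.of fun p q : Fin d × Fin ℓ =>
        A0 p.1 q.1 * (if p.2 = q.2 then (1:F) else 0) + ∑ i, A i p.1 q.1 * M i p.2 q.2,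
      fun s => Matrix.of fun p q : Fin d × Fin ℓ =>
        if p.2 = s.2.1 ∧ q.2 = s.2.2 then A s.1 p.1 q.1 else 0, ?_, ?_⟩
    · ext p q
      simp only [dilate, linMatrix, Matrix.of_apply]
      congr 1
      rw [Fintype.sum_prod_type]
      refine Finset.sum_congr rfl fun i _ => ?_
      rw [Fintype.sum_prod_type]
      simp [ite_and, ite_smul, Finset.sum_ite_eq]
    · set k0 : Fin ℓ := ⟨0, hl⟩ with hk0
      obtain ⟨C0, hC0⟩ := exists_right_inv_of_rank
        (B := Matrix.of fun (j : Fin d) (p : Fin n × Fin d) => A p.1 j p.2) hmonic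
      apply rank_eq_of_right_inv
        (C := Matrix.of fun (x : (Fin n × Fin ℓ × Fin ℓ) × (Fin d × Fin ℓ)) (rs : Fin d × Fin ℓ) =>
          if x.1.2.1 = rs.2 ∧ x.1.2.2 = k0 ∧ x.2.2 = k0 then C0 (x.1.1, x.2.1) rs.1 else 0)
      ext ⟨r, s⟩ ⟨r', s'⟩
      rw [Matrix.mul_apply]
      simp only [Matrix.of_apply]
      rw [Fintype.sum_prod_type]
      rw [Fintype.sum_prod_type]
      have main : ∀ i : Fin n,
          ∑ jk : Fin ℓ × Fin ℓ, ∑ b : Fin d × Fin ℓ,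
            (if s = (i, jk).2.1 ∧ b.2 = (i, jk).2.2 then A i r b.1 else 0) *
              (if (i, jk).2.1 = s' ∧ (i, jk).2.2 = k0 ∧ b.2 = k0 then C0 (i, b.1) r' else 0)
          = ∑ c : Fin d, (if s = s' then A i r c * C0 (i, c) r' else 0) := by
        intro i
        rw [Fintype.sum_prod_type]
        rw [Finset.sum_eq_single s]
        · rw [Finset.sum_eq_single k0]
          · rw [Fintype.sum_prod_type]
            refine Finset.sum_congr rfl fun c _ => ?_
            rw [Finset.sum_eq_single k0]
            · by_cases h : s = s' <;> simp [h]
            · intro t _ ht; simp [ht]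
            · simp
          · intro k _ hk; simp [hk]
          · simp
        · intro j _ hj; simp [Ne.symm hj]
        · simp
      rw [Finset.sum_congr rfl fun i _ => main i]
      rw [Finset.sum_comm]
      by_cases h : s = s'
      · subst h
        simp only [if_true]
        have : ∑ c : Fin d, ∑ i : Fin n, A i r c * C0 (i, c) r'
            = (1 : Matrix (Fin d) (Fin d) F) r r' := by
          rw [← hC0, Matrix.mul_apply, Fintype.sum_prod_type, Finset.sum_comm]
          simp [Matrix.of_apply]
        rw [this, Matrix.one_apply, Matrix.one_apply]
        simp [Prod.ext_iff]
      · simp [Matrix.one_apply, Prod.ext_iff, h]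
  · -- fullness from invertible constant term
    intro hu
    set ev : FreeAlgebra F (Fin n × Fin ℓ × Fin ℓ) →ₐ[F] F :=
      FreeAlgebra.lift F (fun _ => (0:F)) with hev
    set C : Matrix (Fin d × Fin ℓ) (Fin d × Fin ℓ) F := Matrix.of fun p q : Fin d × Fin ℓ =>
        A0 p.1 q.1 * (if p.2 = q.2 then (1 : F) else 0) +
          ∑ i, A i p.1 q.1 * M i p.2 q.2 with hC
    have hmap : (dilate A0 A ℓ M).map ev = C := by
      ext p q
      simp [dilate, Matrix.map_apply, map_sum, hev, hC, FreeAlgebra.lift_ι_apply,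
        Algebra.algebraMap_self]
    rintro ⟨e, he, M1, M2, hfac⟩
    have h2 : C = M1.map ev * M2.map ev := by
      rw [← hmap, hfac]
      exact Matrix.map_mul (f := ev.toRingHom)
    have hrank : C.rank = Fintype.card (Fin d × Fin ℓ) := Matrix.rank_of_isUnit _ hu
    have hle : C.rank ≤ e := by
      rw [h2]
      exact (Matrix.rank_mul_le_right _ _).trans
        ((M2.map ev).rank_le_card_height.trans (Fintype.card_fin e).le)
    omega
end
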